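/- arXiv:1912.05197 — 3 statements merged into one kernel-verified Lean document; each statement's English description precedes it below -/
import Mathlib

section
/- For every real number β ≥ 0, the matrix D⁻¹ − βL is non-singular. -/
open Matrix BigOperators

noncomputable section

/-- The Laplacian of a graph on `Fin n` whose edges carry `s × s` real matrix
weights `W i j`: the `(i,j)` block is `-(W i j)⁻¹` if `i ≠ j` are adjacent,
`0` if `i ≠ j` are non-adjacent, and `∑ k adjacent to i, (W i k)⁻¹` if `i = j`. -/
def lap (n s : ℕ) (G : SimpleGraph (Fin n)) [DecidableRel G.Adj]
    (W : Fin n → Fin n → Matrix (Fin s) (Fin s) ℝ) :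
    Matrix (Fin n × Fin s) (Fin n × Fin s) ℝ :=
  Matrix.of fun p q =>
    if p.1 = q.1 then (∑ k ∈ Finset.univ.filter (fun k => G.Adj p.1 k), (W p.1 k)⁻¹) p.2 q.2
    else if G.Adj p.1 q.1 then -((W p.1 q.1)⁻¹ p.2 q.2) else 0

/-- The inertia `(n₋, n₀, n₊)` of a real symmetric matrix: the numbers of
negative, zero and positive eigenvalues, counted with multiplicity.
(Junk value `(0,0,0)` on non-Hermitian matrices.) -/
def inertia {m : Type*} [Fintype m] [DecidableEq m] (A : Matrix m m ℝ) : ℕ × ℕ × ℕ :=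
  if hA : A.IsHermitian then
    ((Finset.univ.filter fun i => hA.eigenvalues i < 0).card,
     (Finset.univ.filter fun i => hA.eigenvalues i = 0).card,
     (Finset.univ.filter fun i => 0 < hA.eigenvalues i).card)
  else (0, 0, 0)

/-- A real matrix is negative definite. -/
def negDef {m : Type*} [Fintype m] (M : Matrix m m ℝ) : Prop :=
  M.IsHermitian ∧ ∀ x : m → ℝ, x ≠ 0 → x ⬝ᵥ M.mulVec x < 0

/-- A real matrix is negative semidefinite. -/
def negSemidef {m : Type*} [Fintype m] (M : Matrix m m ℝ) : Prop :=
  M.IsHermitian ∧ ∀ x : m → ℝ, x ⬝ᵥ M.mulVec x ≤ 0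

/-- The `ns × ns` block matrix `J` each of whose `n²` blocks is `I_s`. -/
def Jmat (n s : ℕ) : Matrix (Fin n × Fin s) (Fin n × Fin s) ℝ :=
  Matrix.of fun p q => if p.2 = q.2 then 1 else 0

/-- The `ns × s` matrix `U = e ⊗ I_s`, `e` the all-ones vector. -/
def Umat (n s : ℕ) : Matrix (Fin n × Fin s) (Fin s) ℝ :=
  Matrix.of fun p a => if p.2 = a then 1 else 0

variable {n s : ℕ}

def blk (x : Fin n × Fin s → ℝ) (i : Fin n) : Fin s → ℝ := fun a => x (i, a)

lemma expand_quad (A : Matrix (Fin n × Fin s) (Fin n × Fin s) ℝ) (x y : Fin n × Fin s → ℝ) :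
    x ⬝ᵥ A *ᵥ y = ∑ i, ∑ j, ∑ a, ∑ b, x (i,a) * A (i,a) (j,b) * y (j,b) := by
  simp only [dotProduct, mulVec, Fintype.sum_prod_type, Finset.mul_sum, mul_assoc]
  refine Finset.sum_congr rfl fun i _ => ?_
  rw [Finset.sum_comm]

lemma dot_expand (w : Matrix (Fin s) (Fin s) ℝ) (f g : Fin s → ℝ) :
    f ⬝ᵥ w *ᵥ g = ∑ a, ∑ b, f a * w a b * g b := by
  simp only [dotProduct, mulVec, Finset.mul_sum, mul_assoc]

lemma lap_split (G : SimpleGraph (Fin n)) [DecidableRel G.Adj]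
    (W : Fin n → Fin n → Matrix (Fin s) (Fin s) ℝ) (i j : Fin n) (a b : Fin s) :
    lap n s G W (i,a) (j,b) =
      (if i = j then ∑ k ∈ Finset.univ.filter (fun k => G.Adj i k), (W i k)⁻¹ a b else 0)
      + (if G.Adj i j then -((W i j)⁻¹ a b) else 0) := by
  by_cases hij : i = j
  · subst hij
    simp [lap, Matrix.sum_apply, G.irrefl]
  · simp [lap, hij]

lemma lap_rowsum (G : SimpleGraph (Fin n)) [DecidableRel G.Adj]
    (W : Fin n → Fin n → Matrix (Fin s) (Fin s) ℝ) (i : Fin n) (a b : Fin s) :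
    ∑ j, lap n s G W (i,a) (j,b) = 0 := by
  classical
  rw [Finset.sum_congr rfl fun j _ => lap_split G W i j a b]
  rw [Finset.sum_add_distrib, Finset.sum_ite_eq _ i _]
  rw [← Finset.sum_filter]
  simp [Finset.sum_neg_distrib]

lemma lap_colsum (G : SimpleGraph (Fin n)) [DecidableRel G.Adj]
    (W : Fin n → Fin n → Matrix (Fin s) (Fin s) ℝ)
    (hWsym : ∀ i j, W i j = W j i) (j : Fin n) (a b : Fin s) :
    ∑ i, lap n s G W (i,a) (j,b) = 0 := by
  classical
  rw [Finset.sum_congr rfl fun i _ => lap_split G W i j a b]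
  rw [Finset.sum_add_distrib, Finset.sum_ite_eq' _ j _]
  have : ∀ i : Fin n, (if G.Adj i j then -((W i j)⁻¹ a b) else 0)
      = (if G.Adj j i then -((W j i)⁻¹ a b) else 0) := by
    intro i
    rw [hWsym i j]
    exact if_congr (G.adj_comm i j) rfl rfl
  rw [Finset.sum_congr rfl fun i _ => this i]
  rw [← Finset.sum_filter]
  simp [Finset.sum_neg_distrib]

lemma quad_id (M : Matrix (Fin s) (Fin s) ℝ) (f g : Fin s → ℝ) :
    (f - g) ⬝ᵥ M *ᵥ (f - g)
      = f ⬝ᵥ M *ᵥ f + g ⬝ᵥ M *ᵥ g - f ⬝ᵥ M *ᵥ g - g ⬝ᵥ M *ᵥ f := by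
  rw [Matrix.mulVec_sub, dotProduct_sub, sub_dotProduct, sub_dotProduct]
  ring

lemma block_quad (G : SimpleGraph (Fin n)) [DecidableRel G.Adj]
    (W : Fin n → Fin n → Matrix (Fin s) (Fin s) ℝ) (x : Fin n × Fin s → ℝ) (i j : Fin n) :
    ∑ a, ∑ b, x (i,a) * lap n s G W (i,a) (j,b) * x (j,b)
    = (if i = j then ∑ k, (if G.Adj i k then blk x i ⬝ᵥ (W i k)⁻¹ *ᵥ blk x i else 0) else 0)
      + (if G.Adj i j then -(blk x i ⬝ᵥ (W i j)⁻¹ *ᵥ blk x j) else 0) := by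
  classical
  have key : ∀ a b, x (i,a) * lap n s G W (i,a) (j,b) * x (j,b)
      = (if i = j then x (i,a) * ((∑ k ∈ Finset.univ.filter (fun k => G.Adj i k), (W i k)⁻¹) a b) * x (j,b) else 0)
        + (if G.Adj i j then x (i,a) * (-((W i j)⁻¹ a b)) * x (j,b) else 0) := by
    intro a b
    rw [lap_split]
    rw [Matrix.sum_apply]
    split_ifs <;> ring
  simp only [key, Finset.sum_add_distrib]
  congr 1
  · split_ifs with h
    · subst h
      rw [← Finset.sum_filter]
      simp only [Matrix.sum_apply, Finset.mul_sum, Finset.sum_mul]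
      rw [Finset.sum_comm]
      refine ((Finset.sum_congr rfl fun a _ => Finset.sum_comm).trans Finset.sum_comm).trans ?_
      refine Finset.sum_congr rfl fun k _ => ?_
      rw [dot_expand]; exact Finset.sum_comm
    · simp
  · split_ifs with h
    · rw [dot_expand]
      simp only [mul_neg, neg_mul, Finset.sum_neg_distrib]
      rfl
    · simp

lemma posdef_quad_pos {M : Matrix (Fin s) (Fin s) ℝ} (hM : M.PosDef) {v : Fin s → ℝ}
    (hv : v ≠ 0) : 0 < v ⬝ᵥ M *ᵥ v := by
  have := hM.dotProduct_mulVec_pos hv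
  simpa using this

lemma posdef_quad_nonneg {M : Matrix (Fin s) (Fin s) ℝ} (hM : M.PosDef) (v : Fin s → ℝ) :
    0 ≤ v ⬝ᵥ M *ᵥ v := by
  have := hM.posSemidef.dotProduct_mulVec_nonneg v
  simpa using this

lemma lap_quad (G : SimpleGraph (Fin n)) [DecidableRel G.Adj]
    (W : Fin n → Fin n → Matrix (Fin s) (Fin s) ℝ) (hWsym : ∀ i j, W i j = W j i)
    (x : Fin n × Fin s → ℝ) :
    2 * (x ⬝ᵥ lap n s G W *ᵥ x)
      = ∑ i, ∑ j, (if G.Adj i j then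
          (blk x i - blk x j) ⬝ᵥ (W i j)⁻¹ *ᵥ (blk x i - blk x j) else 0) := by
  classical
  have hQ1 : x ⬝ᵥ lap n s G W *ᵥ x
      = (∑ i, ∑ j, if G.Adj i j then blk x i ⬝ᵥ (W i j)⁻¹ *ᵥ blk x i else 0)
        + (∑ i, ∑ j, if G.Adj i j then -(blk x i ⬝ᵥ (W i j)⁻¹ *ᵥ blk x j) else 0) := by
    rw [expand_quad]
    simp only [block_quad G W x, Finset.sum_add_distrib, Finset.sum_ite_eq, Finset.mem_univ,
      if_true]
  have swap1 : (∑ i, ∑ j, if G.Adj i j then blk x i ⬝ᵥ (W i j)⁻¹ *ᵥ blk x i else 0)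
      = ∑ i, ∑ j, if G.Adj i j then blk x j ⬝ᵥ (W i j)⁻¹ *ᵥ blk x j else 0 := by
    rw [Finset.sum_comm]
    refine Finset.sum_congr rfl fun i _ => Finset.sum_congr rfl fun j _ => ?_
    rw [hWsym j i]
    exact if_congr (G.adj_comm j i) rfl rfl
  have swap2 : (∑ i, ∑ j, if G.Adj i j then -(blk x i ⬝ᵥ (W i j)⁻¹ *ᵥ blk x j) else 0)
      = ∑ i, ∑ j, if G.Adj i j then -(blk x j ⬝ᵥ (W i j)⁻¹ *ᵥ blk x i) else 0 := by
    rw [Finset.sum_comm]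
    refine Finset.sum_congr rfl fun i _ => Finset.sum_congr rfl fun j _ => ?_
    rw [hWsym j i]
    exact if_congr (G.adj_comm j i) rfl rfl
  have hQ2 := hQ1
  rw [swap1, swap2] at hQ2
  rw [two_mul]
  nth_rewrite 1 [hQ1]
  rw [hQ2]
  simp only [← Finset.sum_add_distrib]
  refine Finset.sum_congr rfl fun i _ => Finset.sum_congr rfl fun j _ => ?_
  split_ifs with h
  · rw [quad_id]; ring
  · simp

lemma lap_quad_nonneg (G : SimpleGraph (Fin n)) [DecidableRel G.Adj]
    (W : Fin n → Fin n → Matrix (Fin s) (Fin s) ℝ) (hWsym : ∀ i j, W i j = W j i)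
    (hWpd : ∀ i j, G.Adj i j → (W i j).PosDef) (x : Fin n × Fin s → ℝ) :
    0 ≤ x ⬝ᵥ lap n s G W *ᵥ x := by
  have h2 := lap_quad G W hWsym x
  have hnn : 0 ≤ ∑ i, ∑ j, (if G.Adj i j then
      (blk x i - blk x j) ⬝ᵥ (W i j)⁻¹ *ᵥ (blk x i - blk x j) else 0) := by
    refine Finset.sum_nonneg fun i _ => Finset.sum_nonneg fun j _ => ?_
    split_ifs with h
    · exact posdef_quad_nonneg ((hWpd i j h).inv) _
    · exact le_rfl
  linarith [h2 ▸ hnn]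

lemma lap_quad_zero (G : SimpleGraph (Fin n)) [DecidableRel G.Adj]
    (W : Fin n → Fin n → Matrix (Fin s) (Fin s) ℝ) (hWsym : ∀ i j, W i j = W j i)
    (hWpd : ∀ i j, G.Adj i j → (W i j).PosDef) (x : Fin n × Fin s → ℝ)
    (h0 : x ⬝ᵥ lap n s G W *ᵥ x = 0) :
    ∀ i j, G.Adj i j → blk x i = blk x j := by
  classical
  have h2 := lap_quad G W hWsym x
  rw [h0, mul_zero] at h2
  have hterm : ∀ i ∈ Finset.univ, ∀ j ∈ Finset.univ, (0:ℝ) ≤ (if G.Adj i j then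
      (blk x i - blk x j) ⬝ᵥ (W i j)⁻¹ *ᵥ (blk x i - blk x j) else 0) := by
    intro i _ j _
    split_ifs with h
    · exact posdef_quad_nonneg ((hWpd i j h).inv) _
    · exact le_rfl
  intro i j hadj
  by_contra hne
  have hsub : blk x i - blk x j ≠ 0 := sub_ne_zero.mpr hne
  have hpos : 0 < (if G.Adj i j then
      (blk x i - blk x j) ⬝ᵥ (W i j)⁻¹ *ᵥ (blk x i - blk x j) else 0) := by
    rw [if_pos hadj]
    exact posdef_quad_pos ((hWpd i j hadj).inv) hsub
  have houter : ∀ i ∈ Finset.univ, (0:ℝ) ≤ ∑ j, (if G.Adj i j then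
      (blk x i - blk x j) ⬝ᵥ (W i j)⁻¹ *ᵥ (blk x i - blk x j) else 0) :=
    fun i _ => Finset.sum_nonneg (hterm i (Finset.mem_univ i))
  have hin : (0:ℝ) < ∑ i, ∑ j, (if G.Adj i j then
      (blk x i - blk x j) ⬝ᵥ (W i j)⁻¹ *ᵥ (blk x i - blk x j) else 0) := by
    refine Finset.sum_pos' houter ⟨i, Finset.mem_univ i, ?_⟩
    refine Finset.sum_pos' (hterm i (Finset.mem_univ i)) ⟨j, Finset.mem_univ j, hpos⟩
  rw [← h2] at hin
  exact lt_irrefl _ hin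

lemma eq_of_reachable {V : Type*} {α : Type*} (G' : SimpleGraph V) (f : V → α)
    (hadj : ∀ u v, G'.Adj u v → f u = f v) {i j : V} (h : G'.Reachable i j) :
    f i = f j := by
  obtain ⟨q⟩ := h
  induction q with
  | nil => rfl
  | cons h q ih => exact (hadj _ _ h).trans ih

lemma sum_swap_4 {i1 i2 i3 i4 : Type*} (s1 : Finset i1) (s2 : Finset i2)
    (s3 : Finset i3) (s4 : Finset i4) (F : i1 → i2 → i3 → i4 → ℝ) :
    ∑ i ∈ s1, ∑ j ∈ s2, ∑ a ∈ s3, ∑ b ∈ s4, F i j a b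
      = ∑ a ∈ s3, ∑ b ∈ s4, ∑ i ∈ s1, ∑ j ∈ s2, F i j a b :=
  calc ∑ i ∈ s1, ∑ j ∈ s2, ∑ a ∈ s3, ∑ b ∈ s4, F i j a b
      = ∑ i ∈ s1, ∑ a ∈ s3, ∑ j ∈ s2, ∑ b ∈ s4, F i j a b :=
        Finset.sum_congr rfl fun i _ => Finset.sum_comm
    _ = ∑ a ∈ s3, ∑ i ∈ s1, ∑ j ∈ s2, ∑ b ∈ s4, F i j a b := Finset.sum_comm
    _ = ∑ a ∈ s3, ∑ i ∈ s1, ∑ b ∈ s4, ∑ j ∈ s2, F i j a b :=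
        Finset.sum_congr rfl fun a _ => Finset.sum_congr rfl fun i _ => Finset.sum_comm
    _ = ∑ a ∈ s3, ∑ b ∈ s4, ∑ i ∈ s1, ∑ j ∈ s2, F i j a b :=
        Finset.sum_congr rfl fun a _ => Finset.sum_comm

lemma sum_dot (A B : Finset (Fin n)) (w : Matrix (Fin s) (Fin s) ℝ)
    (f : Fin n → Fin s → ℝ) :
    ∑ i ∈ A, ∑ j ∈ B, (f i ⬝ᵥ w *ᵥ f j) = (∑ i ∈ A, f i) ⬝ᵥ w *ᵥ (∑ j ∈ B, f j) := by
  simp only [dot_expand, Finset.sum_apply, Finset.sum_mul, Finset.mul_sum]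
  rw [sum_swap_4]
  exact Finset.sum_congr rfl fun a _ => Finset.sum_congr rfl fun b _ => Finset.sum_comm

lemma list_sum_apply (l : List (Matrix (Fin s) (Fin s) ℝ)) (a b : Fin s) :
    l.sum a b = (l.map fun M => M a b).sum := by
  induction l with
  | nil => simp [Matrix.zero_apply]
  | cons M l ih => simp [Matrix.add_apply, ih]

lemma edge_sum_nonpos (w : Matrix (Fin s) (Fin s) ℝ) (hw : w.PosDef)
    (R : Fin n → Prop) [DecidablePred R] (z : Fin n → Fin s → ℝ)
    (hz : ∑ i, z i = 0) :
    ∑ i, ∑ j, (if (R i ↔ ¬ R j) then z i ⬝ᵥ w *ᵥ z j else 0) ≤ 0 := by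
  classical
  set A := Finset.univ.filter R with hA
  set B := Finset.univ.filter (fun i => ¬ R i) with hB
  have split : ∑ i, ∑ j, (if (R i ↔ ¬ R j) then z i ⬝ᵥ w *ᵥ z j else 0)
      = (∑ i ∈ A, ∑ j ∈ B, z i ⬝ᵥ w *ᵥ z j) + ∑ i ∈ B, ∑ j ∈ A, z i ⬝ᵥ w *ᵥ z j := by
    rw [← Finset.sum_filter_add_sum_filter_not Finset.univ R]
    congr 1
    · refine Finset.sum_congr rfl fun i hi => ?_
      have hRi : R i := (Finset.mem_filter.mp hi).2
      have : ∀ j, (if (R i ↔ ¬ R j) then z i ⬝ᵥ w *ᵥ z j else 0)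
          = (if ¬ R j then z i ⬝ᵥ w *ᵥ z j else 0) := fun j =>
        if_congr (by simp [hRi]) rfl rfl
      rw [Finset.sum_congr rfl fun j _ => this j]
      exact (Finset.sum_filter _ _).symm
    · refine Finset.sum_congr rfl fun i hi => ?_
      have hRi : ¬ R i := (Finset.mem_filter.mp hi).2
      have : ∀ j, (if (R i ↔ ¬ R j) then z i ⬝ᵥ w *ᵥ z j else 0)
          = (if R j then z i ⬝ᵥ w *ᵥ z j else 0) := fun j =>
        if_congr (by simp [hRi]) rfl rfl
      rw [Finset.sum_congr rfl fun j _ => this j]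
      exact (Finset.sum_filter _ _).symm
  rw [split, sum_dot, sum_dot]
  have hAB : (∑ i ∈ A, z i) + (∑ i ∈ B, z i) = 0 := by
    rw [hA, hB, Finset.sum_filter_add_sum_filter_not Finset.univ R]
    exact hz
  have hBA : (∑ i ∈ B, z i) = -(∑ i ∈ A, z i) := by linear_combination hAB
  rw [hBA]
  have h1 : 0 ≤ (∑ i ∈ A, z i) ⬝ᵥ w *ᵥ (∑ i ∈ A, z i) := posdef_quad_nonneg hw _
  rw [Matrix.mulVec_neg, dotProduct_neg, neg_dotProduct]
  linarith

section TreePart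

variable {V : Type*}

lemma reach_or_aux (T : SimpleGraph V) {u v : V} :
    ∀ {i w : V} (_ : T.Walk i w), w = u ∨ w = v →
      (T.deleteEdges {s(u,v)}).Reachable i u ∨ (T.deleteEdges {s(u,v)}).Reachable i v := by
  intro i w q
  induction q with
  | nil =>
    rintro (rfl | rfl)
    · exact Or.inl (SimpleGraph.Reachable.refl _)
    · exact Or.inr (SimpleGraph.Reachable.refl _)
  | @cons a c _ h q ih =>
    intro hw
    by_cases he : s(a,c) = s(u,v)
    · rw [Sym2.eq_iff] at he
      rcases he with ⟨rfl, rfl⟩ | ⟨rfl, rfl⟩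
      · exact Or.inl (SimpleGraph.Reachable.refl _)
      · exact Or.inr (SimpleGraph.Reachable.refl _)
    · have h' : (T.deleteEdges {s(u,v)}).Adj a c := by
        rw [SimpleGraph.deleteEdges_adj]; exact ⟨h, by simpa using he⟩
      rcases ih hw with hR | hR
      · exact Or.inl (h'.reachable.trans hR)
      · exact Or.inr (h'.reachable.trans hR)

lemma reach_or (T : SimpleGraph V) (hT : T.IsTree) {u v : V} (k : V) :
    (T.deleteEdges {s(u,v)}).Reachable k u ∨ (T.deleteEdges {s(u,v)}).Reachable k v := by
  obtain ⟨q⟩ := hT.1.preconnected k u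
  exact reach_or_aux T q (Or.inl rfl)

lemma not_reach (T : SimpleGraph V) (hT : T.IsTree) {u v : V} (huv : T.Adj u v) :
    ¬ (T.deleteEdges {s(u,v)}).Reachable u v := by
  have hb := (SimpleGraph.isAcyclic_iff_forall_edge_isBridge.mp hT.2)
    (T.mem_edgeSet.mpr huv)
  exact SimpleGraph.isBridge_iff.mp hb

lemma path_unique (T : SimpleGraph V) (hT : T.IsTree) {i j : V}
    (p q : T.Walk i j) (hp : p.IsPath) (hq : q.IsPath) : p = q := by
  obtain ⟨r, _, hr⟩ := (SimpleGraph.isTree_iff_existsUnique_path.mp hT).2 i j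
  rw [hr p hp, hr q hq]

lemma mem_edges_iff (T : SimpleGraph V) (hT : T.IsTree) {u v : V} (huv : T.Adj u v)
    {i j : V} (P : T.Walk i j) (hP : P.IsPath) :
    s(u,v) ∈ P.edges ↔
      ((T.deleteEdges {s(u,v)}).Reachable i u ↔ ¬ (T.deleteEdges {s(u,v)}).Reachable j u) := by
  classical
  set e : Sym2 V := s(u,v) with he
  set T' := T.deleteEdges {e} with hT'
  have notuv : ¬ T'.Reachable u v := not_reach T hT huv
  have not_mem_of_reach : T'.Reachable i j → e ∉ P.edges := by
    rintro ⟨q⟩ hmem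
    have ht : ∀ f ∈ q.edges, f ∈ T.edgeSet := by
      intro f hf
      have := q.edges_subset_edgeSet hf
      rw [hT', SimpleGraph.edgeSet_deleteEdges] at this
      exact this.1
    have hnot : e ∉ q.edges := by
      intro hf
      have := q.edges_subset_edgeSet hf
      rw [hT', SimpleGraph.edgeSet_deleteEdges] at this
      exact this.2 rfl
    have hPeq : P = (q.transfer T ht).bypass :=
      path_unique T hT _ _ hP ((q.transfer T ht).bypass_isPath)
    rw [hPeq] at hmem
    have := (q.transfer T ht).edges_bypass_subset hmem
    rw [SimpleGraph.Walk.edges_transfer] at this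
    exact hnot this
  have mem_of_not_reach : ¬ T'.Reachable i j → e ∈ P.edges := by
    intro hnr
    by_contra hmem
    have hsub : ∀ f ∈ P.edges, f ∉ ({e} : Set (Sym2 V)) := by
      intro f hf hfe
      exact hmem (by simpa using hfe ▸ hf)
    exact hnr ⟨P.toDeleteEdges {e} hsub⟩
  constructor
  · intro hmem
    have hnr : ¬ T'.Reachable i j := fun hij => not_mem_of_reach hij hmem
    constructor
    · intro hi hj
      exact hnr (hi.trans hj.symm)
    · intro hnj
      rcases reach_or T hT (u := u) (v := v) i with hi | hi
      · exact hi
      · rcases reach_or T hT (u := u) (v := v) j with hj | hj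
        · exact absurd hj hnj
        · exact absurd (hi.trans hj.symm) hnr
  · intro hiff
    apply mem_of_not_reach
    intro hij
    by_cases hi : T'.Reachable i u
    · exact (hiff.mp hi) (hij.symm.trans hi)
    · have hj : T'.Reachable j u := by
        by_contra hj
        exact hi (hiff.mpr hj)
      exact hi (hij.trans hj)

end TreePart

section DPart

variable {n s : ℕ}

lemma sum_ite_const {α : Type*} (t : Finset α) (c : Prop) [Decidable c] (f : α → ℝ) :
    ∑ x ∈ t, (if c then f x else 0) = if c then ∑ x ∈ t, f x else 0 := by
  split_ifs <;> simp

lemma sum_swap_3 {i1 i2 i3 : Type*} (s1 : Finset i1) (s2 : Finset i2) (s3 : Finset i3)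
    (F : i1 → i2 → i3 → ℝ) :
    ∑ i ∈ s1, ∑ j ∈ s2, ∑ k ∈ s3, F i j k = ∑ j ∈ s2, ∑ k ∈ s3, ∑ i ∈ s1, F i j k :=
  calc ∑ i ∈ s1, ∑ j ∈ s2, ∑ k ∈ s3, F i j k
      = ∑ j ∈ s2, ∑ i ∈ s1, ∑ k ∈ s3, F i j k := Finset.sum_comm
    _ = ∑ j ∈ s2, ∑ k ∈ s3, ∑ i ∈ s1, F i j k :=
        Finset.sum_congr rfl fun j _ => Finset.sum_comm

lemma D_entry (T : SimpleGraph (Fin n)) [Fintype T.edgeSet] (hT : T.IsTree)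
    (Wt : Fin n → Fin n → Matrix (Fin s) (Fin s) ℝ)
    (hWtsym : ∀ i j, Wt i j = Wt j i)
    (D : Matrix (Fin n × Fin s) (Fin n × Fin s) ℝ)
    (hD : ∀ (i j : Fin n) (p : T.Walk i j), p.IsPath →
      ∀ a b : Fin s, D (i, a) (j, b) =
        ((p.darts.map fun d => Wt d.toProd.1 d.toProd.2).sum) a b)
    (P : ∀ i j : Fin n, T.Walk i j) (hP : ∀ i j, (P i j).IsPath)
    (i j : Fin n) (a b : Fin s) :
    D (i,a) (j,b) = ∑ e ∈ T.edgeFinset,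
      (if e ∈ (P i j).edges then Sym2.lift ⟨Wt, hWtsym⟩ e a b else 0) := by
  classical
  rw [hD i j (P i j) (hP i j) a b, list_sum_apply, List.map_map]
  have hmap : ((P i j).darts.map ((fun M : Matrix (Fin s) (Fin s) ℝ => M a b) ∘
        (fun d => Wt d.toProd.1 d.toProd.2)))
      = (P i j).edges.map (fun e => Sym2.lift ⟨Wt, hWtsym⟩ e a b) := by
    rw [SimpleGraph.Walk.edges, List.map_map]
    refine List.map_congr_left fun d _ => ?_
    rcases d with ⟨⟨d1, d2⟩, hd⟩
    simp [SimpleGraph.Dart.edge, Sym2.lift_mk]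
  rw [hmap]
  have hnodup : (P i j).edges.Nodup := (hP i j).isTrail.edges_nodup
  have hsub : (P i j).edges.toFinset ⊆ T.edgeFinset := by
    intro e he
    rw [List.mem_toFinset] at he
    exact SimpleGraph.mem_edgeFinset.mpr ((P i j).edges_subset_edgeSet he)
  rw [← List.sum_toFinset _ hnodup]
  rw [← Finset.inter_eq_right.mpr hsub]
  rw [show (∑ e ∈ T.edgeFinset, if e ∈ (P i j).edges then Sym2.lift ⟨Wt, hWtsym⟩ e a b else 0)
      = ∑ e ∈ T.edgeFinset, if e ∈ (P i j).edges.toFinset then Sym2.lift ⟨Wt, hWtsym⟩ e a b else 0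
    from Finset.sum_congr rfl fun e _ => if_congr List.mem_toFinset.symm rfl rfl]
  exact (Finset.sum_ite_mem _ _ _).symm

lemma cut_nonpos (T : SimpleGraph (Fin n)) (hT : T.IsTree)
    (Wt : Fin n → Fin n → Matrix (Fin s) (Fin s) ℝ)
    (hWtsym : ∀ i j, Wt i j = Wt j i)
    (hWtpd : ∀ i j, T.Adj i j → (Wt i j).PosDef)
    (D : Matrix (Fin n × Fin s) (Fin n × Fin s) ℝ)
    (hD : ∀ (i j : Fin n) (p : T.Walk i j), p.IsPath →
      ∀ a b : Fin s, D (i, a) (j, b) =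
        ((p.darts.map fun d => Wt d.toProd.1 d.toProd.2).sum) a b)
    (z : Fin n × Fin s → ℝ) (hz : ∀ a, ∑ i, z (i,a) = 0) :
    z ⬝ᵥ D *ᵥ z ≤ 0 := by
  classical
  haveI : Fintype T.edgeSet := Set.Finite.fintype (Set.toFinite _)
  have hP' : ∀ i j : Fin n, ∃ p : T.Walk i j, p.IsPath := by
    intro i j
    obtain ⟨q⟩ := hT.1.preconnected i j
    exact ⟨q.bypass, q.bypass_isPath⟩
  choose P hP using hP'
  rw [expand_quad]
  have step1 : ∀ i j : Fin n, (∑ a, ∑ b, z (i,a) * D (i,a) (j,b) * z (j,b))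
      = ∑ e ∈ T.edgeFinset, (if e ∈ (P i j).edges
          then blk z i ⬝ᵥ (Sym2.lift ⟨Wt, hWtsym⟩ e) *ᵥ blk z j else 0) := by
    intro i j
    have key : ∀ a b, z (i,a) * D (i,a) (j,b) * z (j,b)
        = ∑ e ∈ T.edgeFinset, (if e ∈ (P i j).edges
            then z (i,a) * (Sym2.lift ⟨Wt, hWtsym⟩ e a b) * z (j,b) else 0) := by
      intro a b
      rw [D_entry T hT Wt hWtsym D hD P hP i j a b]
      simp only [Finset.mul_sum, Finset.sum_mul]
      refine Finset.sum_congr rfl fun e _ => ?_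
      split_ifs with h <;> ring
    simp only [key]
    rw [sum_swap_3 Finset.univ Finset.univ T.edgeFinset _]
    rw [sum_swap_3 Finset.univ T.edgeFinset Finset.univ _]
    refine Finset.sum_congr rfl fun e _ => ?_
    simp only [sum_ite_const]
    refine if_congr Iff.rfl ?_ rfl
    rw [dot_expand]
    rfl
  simp only [step1]
  rw [sum_swap_3 Finset.univ Finset.univ T.edgeFinset _]
  rw [sum_swap_3 Finset.univ T.edgeFinset Finset.univ _]
  refine Finset.sum_nonpos fun e hmem => ?_
  revert hmem
  refine Sym2.inductionOn e ?_
  intro u v hmem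
  have hadj : T.Adj u v := T.mem_edgeSet.mp (SimpleGraph.mem_edgeFinset.mp hmem)
  have hrw : ∀ i j : Fin n, (if s(u,v) ∈ (P i j).edges
        then blk z i ⬝ᵥ (Sym2.lift ⟨Wt, hWtsym⟩ s(u,v)) *ᵥ blk z j else 0)
      = (if ((T.deleteEdges {s(u,v)}).Reachable i u ↔ ¬ (T.deleteEdges {s(u,v)}).Reachable j u)
          then blk z i ⬝ᵥ (Wt u v) *ᵥ blk z j else 0) := by
    intro i j
    refine if_congr (mem_edges_iff T hT hadj (P i j) (hP i j)) (by rw [Sym2.lift_mk]) rfl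
  simp only [hrw]
  refine edge_sum_nonpos (Wt u v) (hWtpd u v hadj) _ (blk z) ?_
  funext a
  rw [Finset.sum_apply]
  exact hz a

end DPart


/-- For every real β ≥ 0, the matrix D⁻¹ − βL is non-singular. -/
theorem stmt0 (n s : ℕ) (hn : 0 < n) (hs : 0 < s)
    (T : SimpleGraph (Fin n)) (hT : T.IsTree)
    (Wt : Fin n → Fin n → Matrix (Fin s) (Fin s) ℝ)
    (hWtsym : ∀ i j, Wt i j = Wt j i)
    (hWtpd : ∀ i j, T.Adj i j → (Wt i j).PosDef)
    (D : Matrix (Fin n × Fin s) (Fin n × Fin s) ℝ)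
    (hD : ∀ (i j : Fin n) (p : T.Walk i j), p.IsPath →
      ∀ a b : Fin s, D (i, a) (j, b) =
        ((p.darts.map fun d => Wt d.toProd.1 d.toProd.2).sum) a b)
    (hDdet : IsUnit D.det)
    (G : SimpleGraph (Fin n)) [DecidableRel G.Adj] (hG : G.Connected)
    (W : Fin n → Fin n → Matrix (Fin s) (Fin s) ℝ)
    (hWsym : ∀ i j, W i j = W j i)
    (hWpd : ∀ i j, G.Adj i j → (W i j).PosDef)
    (β : ℝ) (hβ : 0 ≤ β) :
    IsUnit (D⁻¹ - β • lap n s G W).det := by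
  classical
  by_contra hdet
  have hdet0 : (D⁻¹ - β • lap n s G W).det = 0 := by
    by_contra h; exact hdet (isUnit_iff_ne_zero.mpr h)
  obtain ⟨x, hx0, hxe⟩ := (Matrix.exists_mulVec_eq_zero_iff).mpr hdet0
  have hDinv : D⁻¹ *ᵥ x = β • ((lap n s G W) *ᵥ x) := by
    rw [Matrix.sub_mulVec, sub_eq_zero] at hxe
    exact hxe.trans (Matrix.smul_mulVec β (lap n s G W) x)
  set z := (lap n s G W) *ᵥ x with hzdef
  have hxz : x = β • (D *ᵥ z) := by
    have h1 : D *ᵥ (D⁻¹ *ᵥ x) = x := by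
      rw [Matrix.mulVec_mulVec, Matrix.mul_nonsing_inv D hDdet, Matrix.one_mulVec]
    rw [← h1, hDinv, Matrix.mulVec_smul]
  rcases eq_or_lt_of_le hβ with hb0 | hbpos
  · exact hx0 (by rw [hxz, ← hb0, zero_smul])
  · have hzc : ∀ a, ∑ i, z (i,a) = 0 := by
      intro a
      have hzi : ∀ i, z (i,a) = ∑ j, ∑ b, lap n s G W (i,a) (j,b) * x (j,b) := by
        intro i
        show ((lap n s G W) *ᵥ x) (i,a) = _
        simp [Matrix.mulVec, dotProduct, Fintype.sum_prod_type]
      rw [Finset.sum_congr rfl fun i _ => hzi i]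
      rw [sum_swap_3 Finset.univ Finset.univ Finset.univ _]
      have hterm : ∀ j b, ∑ i, lap n s G W (i,a) (j,b) * x (j,b) = 0 := by
        intro j b
        rw [← Finset.sum_mul, lap_colsum G W hWsym j a b, zero_mul]
      simp only [hterm, Finset.sum_const_zero]
    have e1 : x ⬝ᵥ (D⁻¹ *ᵥ x) = β * (x ⬝ᵥ z) := by
      rw [hDinv, dotProduct_smul]; simp [smul_eq_mul]
    have e2 : x ⬝ᵥ (D⁻¹ *ᵥ x) = β^2 * (z ⬝ᵥ D *ᵥ z) := by
      rw [hDinv]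
      nth_rewrite 1 [hxz]
      rw [smul_dotProduct, dotProduct_smul, dotProduct_comm]
      simp [smul_eq_mul]
      ring
    have hcut : z ⬝ᵥ D *ᵥ z ≤ 0 := cut_nonpos T hT Wt hWtsym hWtpd D hD z hzc
    have hLq : 0 ≤ x ⬝ᵥ z := lap_quad_nonneg G W hWsym hWpd x
    have hLz : x ⬝ᵥ z = 0 := by nlinarith
    have hconstadj := lap_quad_zero G W hWsym hWpd x hLz
    have hconst : ∀ i j : Fin n, blk x i = blk x j := fun i j =>
      eq_of_reachable G (blk x) hconstadj (hG.preconnected i j)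
    have hz0 : z = 0 := by
      funext p
      obtain ⟨i, a⟩ := p
      show ((lap n s G W) *ᵥ x) (i,a) = 0
      have hzi : ((lap n s G W) *ᵥ x) (i,a) = ∑ j, ∑ b, lap n s G W (i,a) (j,b) * x (j,b) := by
        simp [Matrix.mulVec, dotProduct, Fintype.sum_prod_type]
      rw [hzi]
      have hxv : ∀ j b, x (j,b) = x (i,b) := fun j b => congrFun (hconst j i) b
      rw [Finset.sum_congr rfl fun j _ => Finset.sum_congr rfl fun b _ => by rw [hxv j b]]
      rw [Finset.sum_comm]
      have hterm : ∀ b, ∑ j, lap n s G W (i,a) (j,b) * x (i,b) = 0 := by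
        intro b
        rw [← Finset.sum_mul, lap_rowsum G W i a b, zero_mul]
      simp only [hterm, Finset.sum_const_zero]
    exact hx0 (by rw [hxz, hz0, Matrix.mulVec_zero, smul_zero])
end
end

section
/- For every index i ∈ {1,…,n}, with Δ = {1,…,n}∖{i}, the principal submatrix D⁻¹[[Δ]] of D⁻¹ obtained by deleting the i-th block row and i-th block column is negative semidefinite, and its null space has dimension exactly s. -/
open Matrix BigOperators

noncomputable section

section Stmt4AuxSection
open SimpleGraph

variable {V : Type*} [DecidableEq V] {G : SimpleGraph V}

lemma meet_path (hu : ∀ v w : V, ∃! p : G.Walk v w, p.IsPath) :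
    ∀ {u j : V} (p : G.Walk u j), p.IsPath → ∀ {k : V} (q : G.Walk u k), q.IsPath →
    ∃ r : G.Walk j k, r.IsPath ∧ ∀ e : Sym2 V,
      e ∈ r.edges ↔ ((e ∈ p.edges ∧ e ∉ q.edges) ∨ (e ∈ q.edges ∧ e ∉ p.edges)) := by
  intro u j p
  induction p with
  | nil =>
    intro _ k q hq
    exact ⟨q, hq, by simp⟩
  | @cons u u₁ j h p' ih =>
    intro hp k q hq
    cases q with
    | nil =>
      refine ⟨(Walk.cons h p').reverse, hp.reverse, ?_⟩
      intro e
      simp only [Walk.edges_reverse, List.mem_reverse, Walk.edges_nil, List.not_mem_nil,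
        not_false_iff, and_true, false_and, or_false]
    | @cons _ u₂ _ h' q' =>
      have hp' : p'.IsPath := hp.of_cons
      have hq' : q'.IsPath := hq.of_cons
      have hup : u ∉ p'.support := ((Walk.cons_isPath_iff h p').mp hp).2
      have huq : u ∉ q'.support := ((Walk.cons_isPath_iff h' q').mp hq).2
      by_cases hv : u₁ = u₂
      · subst hv
        obtain ⟨r, hr, hre⟩ := ih hp' q' hq'
        refine ⟨r, hr, ?_⟩
        intro e
        by_cases he : e = s(u, u₁)
        · subst he
          have h1 : s(u, u₁) ∉ p'.edges := fun hmem =>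
            hup (Walk.fst_mem_support_of_mem_edges p' hmem)
          have h2 : s(u, u₁) ∉ q'.edges := fun hmem =>
            huq (Walk.fst_mem_support_of_mem_edges q' hmem)
          simp [hre, h1, h2]
        · simp only [Walk.edges_cons, List.mem_cons, hre]
          tauto
      · -- different first steps: internal disjointness
        have hdisj : ∀ v, v ∈ (Walk.cons h p').support → v ∈ (Walk.cons h' q').support → v = u := by
          intro v hv1 hv2
          by_contra hvu
          have hv1' : v ∈ p'.support := by
            have := Walk.support_cons h p' ▸ hv1
            rcases List.mem_cons.mp this with h0 | h0
            · exact absurd h0 hvu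
            · exact h0
          have hv2' : v ∈ q'.support := by
            have := Walk.support_cons h' q' ▸ hv2
            rcases List.mem_cons.mp this with h0 | h0
            · exact absurd h0 hvu
            · exact h0
          have ht1 : (Walk.cons h (p'.takeUntil v hv1')).IsPath := by
            refine (Walk.cons_isPath_iff _ _).mpr ⟨hp'.takeUntil hv1', fun hmem => ?_⟩
            exact hup (Walk.support_takeUntil_subset _ hv1' hmem)
          have ht2 : (Walk.cons h' (q'.takeUntil v hv2')).IsPath := by
            refine (Walk.cons_isPath_iff _ _).mpr ⟨hq'.takeUntil hv2', fun hmem => ?_⟩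
            exact huq (Walk.support_takeUntil_subset _ hv2' hmem)
          have := (hu u v).unique ht1 ht2
          have := congrArg (fun w => w.getVert 1) this
          simp only [Walk.getVert_cons_succ, Walk.getVert_zero] at this
          exact hv this
        have hedisj : ∀ e : Sym2 V, e ∈ (Walk.cons h p').edges → e ∈ (Walk.cons h' q').edges → False := by
          intro e he1 he2
          induction e with
          | h a b =>
            have ha : a = u := hdisj a (Walk.fst_mem_support_of_mem_edges _ he1)
              (Walk.fst_mem_support_of_mem_edges _ he2)
            have hb : b = u := hdisj b (Walk.snd_mem_support_of_mem_edges _ he1)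
              (Walk.snd_mem_support_of_mem_edges _ he2)
            subst ha; subst hb
            have := Walk.edges_subset_edgeSet _ he1
            simp at this
        refine ⟨(Walk.cons h p').reverse.append (Walk.cons h' q'), ?_, ?_⟩
        · rw [Walk.isPath_def, Walk.support_append]
          refine List.Nodup.append ?_ ?_ ?_
          · rw [Walk.support_reverse]
            exact List.nodup_reverse.mpr hp.support_nodup
          · exact hq.support_nodup.tail
          · intro v hv1 hv2
            rw [Walk.support_reverse, List.mem_reverse] at hv1
            have hvt : v ∈ (Walk.cons h' q').support := List.mem_of_mem_tail hv2
            have : v = u := hdisj v hv1 hvt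
            subst this
            have : (Walk.cons h' q').support.Nodup := hq.support_nodup
            rw [Walk.support_cons] at this hv2
            exact (List.nodup_cons.mp this).1 hv2
        · intro e
          rw [Walk.edges_append, Walk.edges_reverse, List.mem_append, List.mem_reverse]
          constructor
          · rintro (h0 | h0)
            · exact Or.inl ⟨h0, fun hc => hedisj e h0 hc⟩
            · exact Or.inr ⟨h0, fun hc => hedisj e hc h0⟩
          · rintro (⟨h0, _⟩ | ⟨h0, _⟩)
            · exact Or.inl h0
            · exact Or.inr h0

namespace Stmt4Aux

variable {n s : ℕ} {T : SimpleGraph (Fin n)}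

/-- the chosen path between two vertices of a tree -/
noncomputable def pth (hu : ∀ v w : Fin n, ∃! p : T.Walk v w, p.IsPath) (i j : Fin n) :
    T.Walk i j := (hu i j).choose

lemma pth_isPath (hu : ∀ v w : Fin n, ∃! p : T.Walk v w, p.IsPath) (i j : Fin n) :
    (pth hu i j).IsPath := (hu i j).choose_spec.1

lemma pth_unique (hu : ∀ v w : Fin n, ∃! p : T.Walk v w, p.IsPath) {i j : Fin n}
    (p : T.Walk i j) (hp : p.IsPath) : p = pth hu i j := (hu i j).choose_spec.2 p hp

/-- edge set of the chosen path -/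
noncomputable def F (hu : ∀ v w : Fin n, ∃! p : T.Walk v w, p.IsPath) (i j : Fin n) :
    Finset (Sym2 (Fin n)) := (pth hu i j).edges.toFinset

lemma F_self (hu : ∀ v w : Fin n, ∃! p : T.Walk v w, p.IsPath) (i : Fin n) :
    F hu i i = ∅ := by
  have : pth hu i i = Walk.nil := Walk.isPath_iff_eq_nil.mp (pth_isPath hu i i)
  simp [F, this]

lemma F_edge (hu : ∀ v w : Fin n, ∃! p : T.Walk v w, p.IsPath) {i j : Fin n}
    {e : Sym2 (Fin n)} (he : e ∈ F hu i j) : e ∈ T.edgeSet :=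
  (pth hu i j).edges_subset_edgeSet (List.mem_toFinset.mp he)

variable (Wt : Fin n → Fin n → Matrix (Fin s) (Fin s) ℝ)
  (hWtsym : ∀ i j, Wt i j = Wt j i)

/-- weight as a function on unordered pairs -/
noncomputable def Wf (e : Sym2 (Fin n)) : Matrix (Fin s) (Fin s) ℝ :=
  Sym2.lift ⟨Wt, fun u v => hWtsym u v⟩ e

lemma DFORM (hu : ∀ v w : Fin n, ∃! p : T.Walk v w, p.IsPath)
    (D : Matrix (Fin n × Fin s) (Fin n × Fin s) ℝ)
    (hD : ∀ (i j : Fin n) (p : T.Walk i j), p.IsPath →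
      ∀ a b : Fin s, D (i, a) (j, b) =
        ((p.darts.map fun d => Wt d.toProd.1 d.toProd.2).sum) a b)
    (i j k : Fin n) (a b : Fin s) :
    D (j, a) (k, b) = (∑ e ∈ symmDiff (F hu i j) (F hu i k), Wf Wt hWtsym e) a b := by
  obtain ⟨r, hr, hre⟩ := meet_path (G := T) hu (pth hu i j) (pth_isPath hu i j)
    (pth hu i k) (pth_isPath hu i k)
  rw [hD j k r hr a b]
  have h1 : (r.darts.map fun d => Wt d.toProd.1 d.toProd.2) = r.edges.map (Wf Wt hWtsym) := by
    rw [Walk.edges, List.map_map]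
    rfl
  have h2 : r.edges.toFinset = symmDiff (F hu i j) (F hu i k) := by
    ext e
    rw [List.mem_toFinset, Finset.mem_symmDiff, hre e]
    simp [F, List.mem_toFinset]
  rw [h1, ← h2, List.sum_toFinset _ hr.edges_nodup]

/-- 0/1 indicator of an edge lying on the chosen path -/
noncomputable def chi (hu : ∀ v w : Fin n, ∃! p : T.Walk v w, p.IsPath) (i j : Fin n)
    (e : Sym2 (Fin n)) : ℝ := if e ∈ F hu i j then 1 else 0

noncomputable def sg (z : Fin n × Fin s → ℝ) : Fin s → ℝ := fun α => ∑ j, z (j, α)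

noncomputable def aa (hu : ∀ v w : Fin n, ∃! p : T.Walk v w, p.IsPath) (i : Fin n)
    (z : Fin n × Fin s → ℝ) (e : Sym2 (Fin n)) : Fin s → ℝ :=
  fun α => ∑ j, chi hu i j e * z (j, α)

lemma chi_self (hu : ∀ v w : Fin n, ∃! p : T.Walk v w, p.IsPath) (i : Fin n)
    (e : Sym2 (Fin n)) : chi hu i i e = 0 := by
  simp [chi, F_self]

lemma chi_nonedge (hu : ∀ v w : Fin n, ∃! p : T.Walk v w, p.IsPath) {i j : Fin n}
    {e : Sym2 (Fin n)} (he : e ∉ T.edgeSet) : chi hu i j e = 0 := by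
  simp only [chi, ite_eq_right_iff]
  intro hmem
  exact absurd (F_edge hu hmem) he

section Dform
variable (hu : ∀ v w : Fin n, ∃! p : T.Walk v w, p.IsPath)
  (D : Matrix (Fin n × Fin s) (Fin n × Fin s) ℝ)
  (hD : ∀ (i j : Fin n) (p : T.Walk i j), p.IsPath →
      ∀ a b : Fin s, D (i, a) (j, b) =
        ((p.darts.map fun d => Wt d.toProd.1 d.toProd.2).sum) a b)
  (i : Fin n)

include hD in
lemma DFORM' (j k : Fin n) (a b : Fin s) :
    D (j, a) (k, b) = ∑ e : Sym2 (Fin n),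
      (chi hu i j e + chi hu i k e - 2 * chi hu i j e * chi hu i k e) *
        Wf Wt hWtsym e a b := by
  rw [DFORM Wt hWtsym hu D hD i j k a b, Matrix.sum_apply]
  rw [← Finset.univ_inter (symmDiff (F hu i j) (F hu i k)), ← Finset.sum_ite_mem]
  refine Finset.sum_congr rfl fun e _ => ?_
  by_cases h1 : e ∈ F hu i j <;> by_cases h2 : e ∈ F hu i k <;>
    simp only [chi, Finset.mem_symmDiff, h1, h2, not_true, not_false_iff, if_true, if_false,
      ite_true, ite_false, and_self, and_false, false_and, true_and, or_false, false_or,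
      and_true, or_self] <;> ring
end Dform

section Sums
variable {M : Type*} [AddCommMonoid M]

lemma sum4_reorder (f : Fin s → Fin s → Fin n → Fin n → M) :
    ∑ α, ∑ β, ∑ j, ∑ k, f α β j k = ∑ j, ∑ α, ∑ k, ∑ β, f α β j k := by
  calc ∑ α, ∑ β, ∑ j, ∑ k, f α β j k
      = ∑ α, ∑ j, ∑ β, ∑ k, f α β j k :=
        Finset.sum_congr rfl fun α _ => Finset.sum_comm
    _ = ∑ j, ∑ α, ∑ β, ∑ k, f α β j k := Finset.sum_comm
    _ = ∑ j, ∑ α, ∑ k, ∑ β, f α β j k :=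
        Finset.sum_congr rfl fun j _ => Finset.sum_congr rfl fun α _ => Finset.sum_comm

lemma sum4_pairswap (f : Fin n → Fin s → Fin n → Fin s → M) :
    ∑ j, ∑ α, ∑ k, ∑ β, f j α k β = ∑ k, ∑ β, ∑ j, ∑ α, f j α k β := by
  calc ∑ j, ∑ α, ∑ k, ∑ β, f j α k β
      = ∑ j, ∑ k, ∑ α, ∑ β, f j α k β :=
        Finset.sum_congr rfl fun j _ => Finset.sum_comm
    _ = ∑ k, ∑ j, ∑ α, ∑ β, f j α k β := Finset.sum_comm
    _ = ∑ k, ∑ j, ∑ β, ∑ α, f j α k β :=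
        Finset.sum_congr rfl fun k _ => Finset.sum_congr rfl fun j _ => Finset.sum_comm
    _ = ∑ k, ∑ β, ∑ j, ∑ α, f j α k β :=
        Finset.sum_congr rfl fun k _ => Finset.sum_comm

lemma sum5_pull {E : Type*} [Fintype E] (f : Fin n → Fin s → Fin n → Fin s → E → M) :
    ∑ j, ∑ α, ∑ k, ∑ β, ∑ e, f j α k β e = ∑ e, ∑ j, ∑ α, ∑ k, ∑ β, f j α k β e := by
  calc ∑ j, ∑ α, ∑ k, ∑ β, ∑ e, f j α k β e
      = ∑ j, ∑ α, ∑ k, ∑ e, ∑ β, f j α k β e :=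
        Finset.sum_congr rfl fun j _ => Finset.sum_congr rfl fun α _ =>
          Finset.sum_congr rfl fun k _ => Finset.sum_comm
    _ = ∑ j, ∑ α, ∑ e, ∑ k, ∑ β, f j α k β e :=
        Finset.sum_congr rfl fun j _ => Finset.sum_congr rfl fun α _ => Finset.sum_comm
    _ = ∑ j, ∑ e, ∑ α, ∑ k, ∑ β, f j α k β e :=
        Finset.sum_congr rfl fun j _ => Finset.sum_comm
    _ = ∑ e, ∑ j, ∑ α, ∑ k, ∑ β, f j α k β e := Finset.sum_comm

end Sums

lemma dot_mulVec_expand (W : Matrix (Fin s) (Fin s) ℝ) (x y : Fin s → ℝ) :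
    x ⬝ᵥ W.mulVec y = ∑ α, ∑ β, x α * W α β * y β := by
  simp only [dotProduct, Matrix.mulVec, Finset.mul_sum]
  exact Finset.sum_congr rfl fun α _ => Finset.sum_congr rfl fun β _ => by ring

/-- bilinear expansion into the canonical quadruple sum -/
lemma BIL (W : Matrix (Fin s) (Fin s) ℝ) (z : Fin n × Fin s → ℝ) (c d : Fin n → ℝ) :
    (fun α => ∑ j, c j * z (j, α)) ⬝ᵥ W.mulVec (fun β => ∑ k, d k * z (k, β)) =
      ∑ j, ∑ α, ∑ k, ∑ β, (c j * z (j, α)) * W α β * (d k * z (k, β)) := by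
  rw [dot_mulVec_expand,
    ← sum4_reorder (fun α β j k => (c j * z (j, α)) * W α β * (d k * z (k, β)))]
  refine Finset.sum_congr rfl fun α _ => Finset.sum_congr rfl fun β _ => ?_
  simp only [Finset.sum_mul, Finset.mul_sum]
  rw [Finset.sum_comm]

section Keys
variable (hu : ∀ v w : Fin n, ∃! p : T.Walk v w, p.IsPath)
  (D : Matrix (Fin n × Fin s) (Fin n × Fin s) ℝ)
  (hD : ∀ (i j : Fin n) (p : T.Walk i j), p.IsPath →
      ∀ a b : Fin s, D (i, a) (j, b) =
        ((p.darts.map fun d => Wt d.toProd.1 d.toProd.2).sum) a b)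
  (i : Fin n)

include hD in
lemma KEY2 (z : Fin n × Fin s → ℝ) (α : Fin s) :
    (D.mulVec z) (i, α) =
      ∑ e : Sym2 (Fin n), ((Wf Wt hWtsym e).mulVec (aa hu i z e)) α := by
  calc (D.mulVec z) (i, α) = ∑ k, ∑ β, D (i, α) (k, β) * z (k, β) := by
        simp only [Matrix.mulVec, dotProduct]
        rw [Fintype.sum_prod_type]
    _ = ∑ k, ∑ β, ∑ e : Sym2 (Fin n), chi hu i k e * Wf Wt hWtsym e α β * z (k, β) := by
        refine Finset.sum_congr rfl fun k _ => Finset.sum_congr rfl fun β _ => ?_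
        rw [DFORM' Wt hWtsym hu D hD i i k α β, Finset.sum_mul]
        refine Finset.sum_congr rfl fun e _ => ?_
        rw [chi_self]
        ring
    _ = ∑ e : Sym2 (Fin n), ∑ k, ∑ β, chi hu i k e * Wf Wt hWtsym e α β * z (k, β) :=
        (Finset.sum_congr rfl fun k _ => Finset.sum_comm).trans Finset.sum_comm
    _ = ∑ e : Sym2 (Fin n), ((Wf Wt hWtsym e).mulVec (aa hu i z e)) α := by
        refine Finset.sum_congr rfl fun e _ => ?_
        simp only [Matrix.mulVec, dotProduct, aa, Finset.mul_sum]
        rw [Finset.sum_comm]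
        exact Finset.sum_congr rfl fun k _ => Finset.sum_congr rfl fun β _ => by ring
end Keys

lemma Wf_pd (hWtpd : ∀ u v, T.Adj u v → (Wt u v).PosDef) {e : Sym2 (Fin n)}
    (he : e ∈ T.edgeSet) : (Wf Wt hWtsym e).PosDef := by
  induction e using Sym2.ind with
  | _ u v =>
    rw [SimpleGraph.mem_edgeSet] at he
    exact hWtpd u v he

lemma Wf_symm (hWtpd : ∀ u v, T.Adj u v → (Wt u v).PosDef) {e : Sym2 (Fin n)}
    (he : e ∈ T.edgeSet) (α β : Fin s) :
    Wf Wt hWtsym e α β = Wf Wt hWtsym e β α := by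
  have hH := (Wf_pd Wt hWtsym hWtpd he).1
  have := congrFun (congrFun hH α) β
  rw [Matrix.conjTranspose_apply, star_trivial] at this
  exact this.symm

section Keys2
variable (hu : ∀ v w : Fin n, ∃! p : T.Walk v w, p.IsPath)
  (hWtpd : ∀ u v, T.Adj u v → (Wt u v).PosDef)
  (D : Matrix (Fin n × Fin s) (Fin n × Fin s) ℝ)
  (hD : ∀ (i j : Fin n) (p : T.Walk i j), p.IsPath →
      ∀ a b : Fin s, D (i, a) (j, b) =
        ((p.darts.map fun d => Wt d.toProd.1 d.toProd.2).sum) a b)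
  (i : Fin n)

include hWtpd hD in
lemma KEY1 (z : Fin n × Fin s → ℝ) :
    z ⬝ᵥ D.mulVec z =
      2 * ∑ e : Sym2 (Fin n), (sg z ⬝ᵥ (Wf Wt hWtsym e).mulVec (aa hu i z e))
      - 2 * ∑ e : Sym2 (Fin n), (aa hu i z e ⬝ᵥ (Wf Wt hWtsym e).mulVec (aa hu i z e)) := by
  have hQ2 : ∀ e : Sym2 (Fin n),
      sg z ⬝ᵥ (Wf Wt hWtsym e).mulVec (aa hu i z e) =
      ∑ j, ∑ α, ∑ k, ∑ β,
        ((1:ℝ) * z (j, α)) * Wf Wt hWtsym e α β * (chi hu i k e * z (k, β)) := by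
    intro e
    have := BIL (Wf Wt hWtsym e) z (fun _ => (1:ℝ)) (fun k => chi hu i k e)
    have hsg : (fun α => ∑ j, (1:ℝ) * z (j, α)) = sg z := by
      funext α; simp [sg]
    have haa : (fun β => ∑ k, chi hu i k e * z (k, β)) = aa hu i z e := rfl
    rw [hsg, haa] at this
    exact this
  have hQ3 : ∀ e : Sym2 (Fin n),
      aa hu i z e ⬝ᵥ (Wf Wt hWtsym e).mulVec (aa hu i z e) =
      ∑ j, ∑ α, ∑ k, ∑ β,
        (chi hu i j e * z (j, α)) * Wf Wt hWtsym e α β * (chi hu i k e * z (k, β)) := by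
    intro e
    have := BIL (Wf Wt hWtsym e) z (fun j => chi hu i j e) (fun k => chi hu i k e)
    have haa : (fun β => ∑ k, chi hu i k e * z (k, β)) = aa hu i z e := rfl
    rw [haa] at this
    exact this
  -- Q1 : the (χ, 1) version equals the (1, χ) version
  have hQ1 : ∀ e : Sym2 (Fin n),
      (∑ j, ∑ α, ∑ k, ∑ β,
        (chi hu i j e * z (j, α)) * Wf Wt hWtsym e α β * ((1:ℝ) * z (k, β))) =
      ∑ j, ∑ α, ∑ k, ∑ β,
        ((1:ℝ) * z (j, α)) * Wf Wt hWtsym e α β * (chi hu i k e * z (k, β)) := by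
    intro e
    by_cases he : e ∈ T.edgeSet
    · rw [sum4_pairswap (fun j α k β =>
        ((1:ℝ) * z (j, α)) * Wf Wt hWtsym e α β * (chi hu i k e * z (k, β)))]
      refine Finset.sum_congr rfl fun j _ => Finset.sum_congr rfl fun α _ =>
        Finset.sum_congr rfl fun k _ => Finset.sum_congr rfl fun β _ => ?_
      rw [Wf_symm Wt hWtsym hWtpd he α β]
      ring
    · refine Finset.sum_congr rfl fun j _ => Finset.sum_congr rfl fun α _ =>
        Finset.sum_congr rfl fun k _ => Finset.sum_congr rfl fun β _ => ?_
      rw [chi_nonedge hu he, chi_nonedge hu he]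
      ring
  calc z ⬝ᵥ D.mulVec z
      = ∑ j, ∑ α, ∑ k, ∑ β, z (j, α) * D (j, α) (k, β) * z (k, β) := by
        simp only [dotProduct, Matrix.mulVec, Finset.mul_sum, Fintype.sum_prod_type]
        exact Finset.sum_congr rfl fun j _ => Finset.sum_congr rfl fun α _ =>
          Finset.sum_congr rfl fun k _ => Finset.sum_congr rfl fun β _ => by ring
    _ = ∑ j, ∑ α, ∑ k, ∑ β, ∑ e : Sym2 (Fin n),
          z (j, α) * ((chi hu i j e + chi hu i k e - 2 * chi hu i j e * chi hu i k e) *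
            Wf Wt hWtsym e α β) * z (k, β) := by
        refine Finset.sum_congr rfl fun j _ => Finset.sum_congr rfl fun α _ =>
          Finset.sum_congr rfl fun k _ => Finset.sum_congr rfl fun β _ => ?_
        rw [DFORM' Wt hWtsym hu D hD i j k α β, Finset.mul_sum, Finset.sum_mul]
    _ = ∑ e : Sym2 (Fin n), ∑ j, ∑ α, ∑ k, ∑ β,
          z (j, α) * ((chi hu i j e + chi hu i k e - 2 * chi hu i j e * chi hu i k e) *
            Wf Wt hWtsym e α β) * z (k, β) :=
        sum5_pull _
    _ = ∑ e : Sym2 (Fin n),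
          ((∑ j, ∑ α, ∑ k, ∑ β,
            (chi hu i j e * z (j, α)) * Wf Wt hWtsym e α β * ((1:ℝ) * z (k, β)))
          + (∑ j, ∑ α, ∑ k, ∑ β,
            ((1:ℝ) * z (j, α)) * Wf Wt hWtsym e α β * (chi hu i k e * z (k, β)))
          - 2 * ∑ j, ∑ α, ∑ k, ∑ β,
            (chi hu i j e * z (j, α)) * Wf Wt hWtsym e α β * (chi hu i k e * z (k, β))) := by
        refine Finset.sum_congr rfl fun e _ => ?_
        simp only [← Finset.sum_add_distrib, ← Finset.sum_sub_distrib, Finset.mul_sum]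
        exact Finset.sum_congr rfl fun j _ => Finset.sum_congr rfl fun α _ =>
          Finset.sum_congr rfl fun k _ => Finset.sum_congr rfl fun β _ => by ring
    _ = ∑ e : Sym2 (Fin n),
          (2 * (sg z ⬝ᵥ (Wf Wt hWtsym e).mulVec (aa hu i z e))
           - 2 * (aa hu i z e ⬝ᵥ (Wf Wt hWtsym e).mulVec (aa hu i z e))) := by
        refine Finset.sum_congr rfl fun e _ => ?_
        rw [hQ1 e, ← hQ2 e, ← hQ3 e]
        ring
    _ = 2 * ∑ e : Sym2 (Fin n), (sg z ⬝ᵥ (Wf Wt hWtsym e).mulVec (aa hu i z e))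
        - 2 * ∑ e : Sym2 (Fin n), (aa hu i z e ⬝ᵥ (Wf Wt hWtsym e).mulVec (aa hu i z e)) := by
        rw [Finset.sum_sub_distrib, ← Finset.mul_sum, ← Finset.mul_sum]
end Keys2

section PosPart
variable (hu : ∀ v w : Fin n, ∃! p : T.Walk v w, p.IsPath)
  (hWtpd : ∀ u v, T.Adj u v → (Wt u v).PosDef) (i : Fin n)

include hWtpd in
lemma aa_dot_nonneg (z : Fin n × Fin s → ℝ) (e : Sym2 (Fin n)) :
    0 ≤ aa hu i z e ⬝ᵥ (Wf Wt hWtsym e).mulVec (aa hu i z e) := by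
  by_cases he : e ∈ T.edgeSet
  · have := ((Wf_pd Wt hWtsym hWtpd he).posSemidef).dotProduct_mulVec_nonneg (aa hu i z e)
    rwa [star_trivial] at this
  · have haz : aa hu i z e = 0 := by
      funext α
      refine Finset.sum_eq_zero fun j _ => ?_
      rw [chi_nonedge hu he, zero_mul]
    rw [haz]
    simp

include hWtpd in
lemma aa_dot_zero (z : Fin n × Fin s → ℝ) (e : Sym2 (Fin n))
    (h : aa hu i z e ⬝ᵥ (Wf Wt hWtsym e).mulVec (aa hu i z e) = 0) :
    aa hu i z e = 0 := by
  by_cases he : e ∈ T.edgeSet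
  · by_contra haz
    have := (Wf_pd Wt hWtsym hWtpd he).dotProduct_mulVec_pos haz
    rw [star_trivial, h] at this
    exact lt_irrefl 0 this
  · funext α
    refine Finset.sum_eq_zero fun j _ => ?_
    rw [chi_nonedge hu he, zero_mul]

end PosPart

/-- the leaf-stripping argument: if all the cut sums vanish then `z` vanishes
outside the block `i`. -/
lemma LEAFSTRIP (hu : ∀ v w : Fin n, ∃! p : T.Walk v w, p.IsPath) (i : Fin n)
    (z : Fin n × Fin s → ℝ) (haa : ∀ e : Sym2 (Fin n), aa hu i z e = 0) :
    ∀ j : Fin n, j ≠ i → ∀ α : Fin s, z (j, α) = 0 := by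
  suffices H : ∀ (m : ℕ) (j : Fin n), j ≠ i → n ≤ (pth hu i j).length + m →
      ∀ α : Fin s, z (j, α) = 0 by
    intro j hj α
    exact H n j hj (by omega) α
  intro m
  induction m with
  | zero =>
    intro j hj hlen α
    exfalso
    have := (pth_isPath hu i j).length_lt
    rw [Fintype.card_fin] at this
    omega
  | succ m ih =>
    intro j hj hlen α
    -- the last edge of the path from i to j
    have hrev : ¬ (pth hu i j).reverse.Nil := Walk.not_nil_of_ne hj
    obtain ⟨u, hadj, q', hq⟩ := Walk.not_nil_iff.mp hrev
    have he_p : s(j, u) ∈ (pth hu i j).edges := by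
      have : s(j, u) ∈ (pth hu i j).reverse.edges := by
        rw [hq, Walk.edges_cons]
        exact List.mem_cons_self
      rwa [Walk.edges_reverse, List.mem_reverse] at this
    have he_Fj : s(j, u) ∈ F hu i j := List.mem_toFinset.mpr he_p
    -- any other path through this edge is longer
    have hlonger : ∀ k : Fin n, k ≠ j → s(j, u) ∈ F hu i k →
        (pth hu i j).length + 1 ≤ (pth hu i k).length := by
      intro k hkj heFk
      have he_pk : s(j, u) ∈ (pth hu i k).edges := List.mem_toFinset.mp heFk
      have hjk : j ∈ (pth hu i k).support :=
        Walk.fst_mem_support_of_mem_edges _ he_pk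
      have ht : ((pth hu i k).takeUntil j hjk).IsPath :=
        (pth_isPath hu i k).takeUntil hjk
      have htp : (pth hu i k).takeUntil j hjk = pth hu i j := pth_unique hu _ ht
      have hsplit := congrArg Walk.length ((pth hu i k).take_spec hjk)
      rw [Walk.length_append, htp] at hsplit
      have hdrop : ((pth hu i k).dropUntil j hjk).length ≠ 0 := by
        intro h0
        have hje : j = k := Walk.eq_of_length_eq_zero h0
        exact hkj hje.symm
      omega
    have hsum := congrFun (haa s(j, u)) α
    rw [aa] at hsum
    have hchi : chi hu i j s(j, u) = 1 := by rw [chi, if_pos he_Fj]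
    have : ∑ k, chi hu i k s(j, u) * z (k, α) = chi hu i j s(j, u) * z (j, α) := by
      refine Finset.sum_eq_single j (fun k _ hkj => ?_) (fun h => absurd (Finset.mem_univ j) h)
      by_cases heFk : s(j, u) ∈ F hu i k
      · by_cases hki : k = i
        · subst hki
          rw [F_self] at heFk
          exact absurd heFk (Finset.notMem_empty _)
        · rw [ih k hki (by
            have := hlonger k hkj heFk
            omega) α, mul_zero]
      · rw [chi, if_neg heFk, zero_mul]
    rw [this, hchi, one_mul] at hsum
    exact hsum

include hWtsym in
lemma DHERM (hu : ∀ v w : Fin n, ∃! p : T.Walk v w, p.IsPath)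
    (hWtpd : ∀ u v, T.Adj u v → (Wt u v).PosDef)
    (D : Matrix (Fin n × Fin s) (Fin n × Fin s) ℝ)
    (hD : ∀ (i j : Fin n) (p : T.Walk i j), p.IsPath →
      ∀ a b : Fin s, D (i, a) (j, b) =
        ((p.darts.map fun d => Wt d.toProd.1 d.toProd.2).sum) a b)
    (i : Fin n) : D.IsHermitian := by
  have : ∀ p q : Fin n × Fin s, D q p = D p q := by
    rintro ⟨j, a⟩ ⟨k, b⟩
    rw [DFORM Wt hWtsym hu D hD i k j b a, DFORM Wt hWtsym hu D hD i j k a b,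
      Matrix.sum_apply, Matrix.sum_apply, symmDiff_comm]
    refine Finset.sum_congr rfl fun e he => ?_
    have heE : e ∈ T.edgeSet := by
      rcases Finset.mem_symmDiff.mp he with ⟨h1, _⟩ | ⟨h1, _⟩ <;> exact F_edge hu h1
    exact Wf_symm Wt hWtsym hWtpd heE b a
  ext p q
  rw [Matrix.conjTranspose_apply, star_trivial]
  exact (this q p).symm

end Stmt4Aux

open Stmt4Aux in
theorem stmt4' (n s : ℕ) (hn : 0 < n) (hs : 0 < s)
    (T : SimpleGraph (Fin n)) (hT : T.IsTree)
    (Wt : Fin n → Fin n → Matrix (Fin s) (Fin s) ℝ)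
    (hWtsym : ∀ i j, Wt i j = Wt j i)
    (hWtpd : ∀ i j, T.Adj i j → (Wt i j).PosDef)
    (D : Matrix (Fin n × Fin s) (Fin n × Fin s) ℝ)
    (hD : ∀ (i j : Fin n) (p : T.Walk i j), p.IsPath →
      ∀ a b : Fin s, D (i, a) (j, b) =
        ((p.darts.map fun d => Wt d.toProd.1 d.toProd.2).sum) a b)
    (hDdet : IsUnit D.det)
    (i : Fin n) :
    negSemidef (D⁻¹.submatrix
      (fun p : {j : Fin n // j ≠ i} × Fin s => ((p.1 : Fin n), p.2))
      (fun p : {j : Fin n // j ≠ i} × Fin s => ((p.1 : Fin n), p.2))) ∧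
    Module.finrank ℝ
      (LinearMap.ker (Matrix.mulVecLin (D⁻¹.submatrix
        (fun p : {j : Fin n // j ≠ i} × Fin s => ((p.1 : Fin n), p.2))
        (fun p : {j : Fin n // j ≠ i} × Fin s => ((p.1 : Fin n), p.2))))) = s := by
  have hu : ∀ v w : Fin n, ∃! p : T.Walk v w, p.IsPath := hT.existsUnique_path
  set emb : {j : Fin n // j ≠ i} × Fin s → Fin n × Fin s :=
    fun p => ((p.1 : Fin n), p.2) with hemb
  set B : Matrix ({j : Fin n // j ≠ i} × Fin s) ({j : Fin n // j ≠ i} × Fin s) ℝ :=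
    D⁻¹.submatrix emb emb with hBdef
  -- extension by zero
  set ext0 : ({j : Fin n // j ≠ i} × Fin s → ℝ) → (Fin n × Fin s → ℝ) :=
    fun x p => if h : p.1 = i then 0 else x (⟨p.1, h⟩, p.2) with hext0
  have hext_emb : ∀ x q, ext0 x (emb q) = x q := by
    rintro x ⟨⟨j, hj⟩, β⟩
    simp only [hext0, hemb]
    rw [dif_neg hj]
  have hext_i : ∀ x β, ext0 x (i, β) = 0 := by
    intro x β
    simp [hext0]
  have hsplit : ∀ (g : Fin n × Fin s → ℝ) (x : {j : Fin n // j ≠ i} × Fin s → ℝ),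
      (∑ p, ext0 x p * g p) = ∑ q, x q * g (emb q) := by
    intro g x
    rw [Fintype.sum_prod_type]
    have hterm : ∀ k : Fin n, ∑ β, ext0 x (k, β) * g (k, β) =
        if h : k = i then 0 else ∑ β, x (⟨k, h⟩, β) * g (k, β) := by
      intro k
      by_cases h : k = i
      · subst h
        rw [dif_pos rfl]
        refine Finset.sum_eq_zero fun β _ => ?_
        rw [hext_i, zero_mul]
      · rw [dif_neg h]
        refine Finset.sum_congr rfl fun β _ => ?_
        simp only [hext0]
        rw [dif_neg h]
    calc ∑ k, ∑ β, ext0 x (k, β) * g (k, β)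
        = ∑ k ∈ Finset.univ.erase i, ∑ β, ext0 x (k, β) * g (k, β) := by
          rw [← Finset.sum_erase_add Finset.univ _ (Finset.mem_univ i)]
          have : ∑ β, ext0 x (i, β) * g (i, β) = 0 :=
            Finset.sum_eq_zero fun β _ => by rw [hext_i, zero_mul]
          rw [this, add_zero]
      _ = ∑ q : {j : Fin n // j ≠ i}, ∑ β, ext0 x ((q : Fin n), β) * g ((q : Fin n), β) :=
          Finset.sum_subtype _ (fun x => by simp) _
      _ = ∑ q : {j : Fin n // j ≠ i}, ∑ β, x (q, β) * g ((q : Fin n), β) := by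
          refine Finset.sum_congr rfl fun q _ => Finset.sum_congr rfl fun β _ => ?_
          have := hext_emb x (q, β)
          simp only [hemb] at this
          rw [this]
      _ = ∑ q : {j : Fin n // j ≠ i} × Fin s, x q * g (emb q) := by
          rw [Fintype.sum_prod_type]
  have hmv : ∀ x q, B.mulVec x q = (D⁻¹.mulVec (ext0 x)) (emb q) := by
    intro x q
    calc (B.mulVec x) q = ∑ p, x p * D⁻¹ (emb q) (emb p) := by
          simp only [Matrix.mulVec, dotProduct, hBdef, Matrix.submatrix_apply]
          exact Finset.sum_congr rfl fun p _ => by ring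
      _ = ∑ r, ext0 x r * D⁻¹ (emb q) r := (hsplit (fun r => D⁻¹ (emb q) r) x).symm
      _ = (D⁻¹.mulVec (ext0 x)) (emb q) := by
          simp only [Matrix.mulVec, dotProduct]
          exact Finset.sum_congr rfl fun r _ => by ring
  have hdot : ∀ x, x ⬝ᵥ B.mulVec x = ext0 x ⬝ᵥ D⁻¹.mulVec (ext0 x) := by
    intro x
    simp only [dotProduct]
    rw [hsplit (fun r => D⁻¹.mulVec (ext0 x) r) x]
    exact Finset.sum_congr rfl fun q _ => by rw [hmv x q]
  have hDDinv : ∀ y, D.mulVec (D⁻¹.mulVec y) = y := by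
    intro y
    rw [Matrix.mulVec_mulVec, Matrix.mul_nonsing_inv _ hDdet, Matrix.one_mulVec]
  have hDinvD : ∀ y, D⁻¹.mulVec (D.mulVec y) = y := by
    intro y
    rw [Matrix.mulVec_mulVec, Matrix.nonsing_inv_mul _ hDdet, Matrix.one_mulVec]
  -- the master quadratic-form formula
  have hQF : ∀ x, x ⬝ᵥ B.mulVec x =
      -2 * ∑ e : Sym2 (Fin n),
        (aa hu i (D⁻¹.mulVec (ext0 x)) e ⬝ᵥ
          (Wf Wt hWtsym e).mulVec (aa hu i (D⁻¹.mulVec (ext0 x)) e)) := by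
    intro x
    set z := D⁻¹.mulVec (ext0 x) with hz
    have h1 : x ⬝ᵥ B.mulVec x = z ⬝ᵥ D.mulVec z := by
      rw [hdot x]
      calc ext0 x ⬝ᵥ D⁻¹.mulVec (ext0 x) = ext0 x ⬝ᵥ z := rfl
        _ = (D.mulVec z) ⬝ᵥ z := by rw [hz, hDDinv]
        _ = z ⬝ᵥ D.mulVec z := dotProduct_comm _ _
    have h2 : ∀ α, (D.mulVec z) (i, α) = 0 := by
      intro α
      rw [hz, hDDinv, hext_i]
    have h3 : ∑ e : Sym2 (Fin n), (sg z ⬝ᵥ (Wf Wt hWtsym e).mulVec (aa hu i z e)) = 0 := by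
      have : ∀ e : Sym2 (Fin n), sg z ⬝ᵥ (Wf Wt hWtsym e).mulVec (aa hu i z e) =
          ∑ α, sg z α * ((Wf Wt hWtsym e).mulVec (aa hu i z e)) α := fun e => rfl
      rw [Finset.sum_congr rfl fun e _ => this e, Finset.sum_comm]
      refine Finset.sum_eq_zero fun α _ => ?_
      rw [← Finset.mul_sum, ← KEY2 Wt hWtsym hu D hD i z α, h2 α, mul_zero]
    rw [h1, KEY1 Wt hWtsym hu hWtpd D hD i z, h3]
    ring
  have hnonneg : ∀ (z : Fin n × Fin s → ℝ) (e : Sym2 (Fin n)),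
      0 ≤ aa hu i z e ⬝ᵥ (Wf Wt hWtsym e).mulVec (aa hu i z e) :=
    fun z e => aa_dot_nonneg Wt hWtsym hu hWtpd i z e
  constructor
  · constructor
    · -- Hermitian
      exact ((DHERM Wt hWtsym hu hWtpd D hD i).inv).submatrix emb
    · intro x
      rw [hQF x]
      have h0 : (0:ℝ) ≤ ∑ e : Sym2 (Fin n),
          (aa hu i (D⁻¹.mulVec (ext0 x)) e ⬝ᵥ
            (Wf Wt hWtsym e).mulVec (aa hu i (D⁻¹.mulVec (ext0 x)) e)) :=
        Finset.sum_nonneg (fun e _ => hnonneg (D⁻¹.mulVec (ext0 x)) e)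
      nlinarith
  · -- the kernel has dimension s
    classical
    set eiv : (Fin s → ℝ) → (Fin n × Fin s → ℝ) :=
      fun v p => if p.1 = i then v p.2 else 0 with heiv
    have hDzero_i : ∀ a b : Fin s, D (i, a) (i, b) = 0 := by
      intro a b
      rw [DFORM Wt hWtsym hu D hD i i i a b]
      simp [symmDiff_self]
    have hC1 : ∀ v, ext0 (fun q => (D.mulVec (eiv v)) (emb q)) = D.mulVec (eiv v) := by
      intro v
      funext p
      rcases p with ⟨k, β⟩
      by_cases h : k = i
      · subst h
        have hL : ext0 (fun q => (D.mulVec (eiv v)) (emb q)) (k, β) = 0 := by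
          simp [hext0]
        rw [hL]
        symm
        show ∑ q : Fin n × Fin s, D (k, β) q * eiv v q = 0
        refine Finset.sum_eq_zero ?_
        rintro ⟨k', b⟩ _
        by_cases hk : k' = k
        · subst hk
          have : eiv v (k', b) = v b := by simp [heiv]
          rw [this, hDzero_i, zero_mul]
        · have : eiv v (k', b) = 0 := by simp [heiv, hk]
          rw [this, mul_zero]
      · simp only [hext0]
        rw [dif_neg h]
    have hxfun_ker : ∀ v, B.mulVec (fun q => (D.mulVec (eiv v)) (emb q)) = 0 := by
      intro v
      funext q
      rw [hmv, hC1, hDinvD]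
      have : (emb q).1 ≠ i := q.1.2
      simp [heiv, this]
    have hext0_zero : ext0 0 = 0 := by
      funext p
      by_cases h : p.1 = i <;> simp [hext0, h]
    have heiv_add : ∀ v w, eiv (v + w) = eiv v + eiv w := by
      intro v w
      funext p
      by_cases h : p.1 = i <;> simp [heiv, h]
    have heiv_smul : ∀ (c : ℝ) v, eiv (c • v) = c • eiv v := by
      intro c v
      funext p
      by_cases h : p.1 = i <;> simp [heiv, h]
    set φ : (Fin s → ℝ) →ₗ[ℝ] ({j : Fin n // j ≠ i} × Fin s → ℝ) :=
      { toFun := fun v q => (D.mulVec (eiv v)) (emb q)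
        map_add' := by
          intro v w
          funext q
          show (D.mulVec (eiv (v + w))) (emb q) =
            (D.mulVec (eiv v)) (emb q) + (D.mulVec (eiv w)) (emb q)
          rw [heiv_add, Matrix.mulVec_add]
          rfl
        map_smul' := by
          intro c v
          funext q
          show (D.mulVec (eiv (c • v))) (emb q) = c • ((D.mulVec (eiv v)) (emb q))
          rw [heiv_smul, Matrix.mulVec_smul]
          rfl } with hφ
    have hφ_apply : ∀ v q, φ v q = (D.mulVec (eiv v)) (emb q) := fun v q => rfl
    have hφker : ∀ v, φ v ∈ LinearMap.ker B.mulVecLin := by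
      intro v
      rw [LinearMap.mem_ker, Matrix.mulVecLin_apply]
      exact hxfun_ker v
    have hφinj : Function.Injective φ := by
      intro v w hvw
      have h0 : φ (v - w) = 0 := by rw [map_sub, hvw, sub_self]
      have hD0 : D.mulVec (eiv (v - w)) = 0 := by
        rw [← hC1 (v - w)]
        have : (fun q => (D.mulVec (eiv (v - w))) (emb q)) = φ (v - w) := rfl
        rw [this, h0, hext0_zero]
      have he0 : eiv (v - w) = 0 := by
        have := hDinvD (eiv (v - w))
        rw [hD0, Matrix.mulVec_zero] at this
        exact this.symm
      have : v - w = 0 := by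
        funext b
        have := congrFun he0 (i, b)
        simpa [heiv] using this
      exact sub_eq_zero.mp this
    have hφsurj : ∀ x : {j : Fin n // j ≠ i} × Fin s → ℝ,
        B.mulVec x = 0 → ∃ v, φ v = x := by
      intro x hx
      set z := D⁻¹.mulVec (ext0 x) with hz
      have hqf0 : x ⬝ᵥ B.mulVec x = 0 := by rw [hx, dotProduct_zero]
      have hsum0 : ∑ e : Sym2 (Fin n),
          (aa hu i z e ⬝ᵥ (Wf Wt hWtsym e).mulVec (aa hu i z e)) = 0 := by
        have := hQF x
        rw [hqf0] at this
        have h0 : (0:ℝ) ≤ ∑ e : Sym2 (Fin n),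
            (aa hu i z e ⬝ᵥ (Wf Wt hWtsym e).mulVec (aa hu i z e)) :=
          Finset.sum_nonneg (fun e _ => hnonneg z e)
        linarith
      have haa0 : ∀ e : Sym2 (Fin n), aa hu i z e = 0 := by
        intro e
        refine aa_dot_zero Wt hWtsym hu hWtpd i z e ?_
        exact (Finset.sum_eq_zero_iff_of_nonneg (fun e _ => hnonneg z e)).mp hsum0 e
          (Finset.mem_univ e)
      have hz0 : ∀ j : Fin n, j ≠ i → ∀ α : Fin s, z (j, α) = 0 :=
        LEAFSTRIP hu i z haa0
      refine ⟨fun b => z (i, b), ?_⟩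
      have hzeiv : eiv (fun b => z (i, b)) = z := by
        funext p
        rcases p with ⟨k, β⟩
        by_cases h : k = i
        · subst h; simp [heiv]
        · simp [heiv, h, hz0 k h β]
      funext q
      rw [hφ_apply, hzeiv, hz, hDDinv, hext_emb]
    set ψ := φ.codRestrict (LinearMap.ker B.mulVecLin) hφker with hψ
    have hψbij : Function.Bijective ψ := by
      constructor
      · intro v w hvw
        apply hφinj
        have := congrArg Subtype.val hvw
        exact this
      · rintro ⟨x, hxker⟩
        rw [LinearMap.mem_ker, Matrix.mulVecLin_apply] at hxker
        obtain ⟨v, hv⟩ := hφsurj x hxker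
        exact ⟨v, Subtype.ext hv⟩
    have hequiv := LinearEquiv.ofBijective ψ hψbij
    exact (LinearEquiv.finrank_eq hequiv).symm.trans (Module.finrank_fin_fun ℝ)

end Stmt4AuxSection

/-- For every i, the principal submatrix D⁻¹[[Δ]], Δ = [n] ∖ {i}, is negative
semidefinite and its null space has dimension exactly s. -/
theorem stmt4 (n s : ℕ) (hn : 0 < n) (hs : 0 < s)
    (T : SimpleGraph (Fin n)) (hT : T.IsTree)
    (Wt : Fin n → Fin n → Matrix (Fin s) (Fin s) ℝ)
    (hWtsym : ∀ i j, Wt i j = Wt j i)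
    (hWtpd : ∀ i j, T.Adj i j → (Wt i j).PosDef)
    (D : Matrix (Fin n × Fin s) (Fin n × Fin s) ℝ)
    (hD : ∀ (i j : Fin n) (p : T.Walk i j), p.IsPath →
      ∀ a b : Fin s, D (i, a) (j, b) =
        ((p.darts.map fun d => Wt d.toProd.1 d.toProd.2).sum) a b)
    (hDdet : IsUnit D.det)
    (i : Fin n) :
    negSemidef (D⁻¹.submatrix
      (fun p : {j : Fin n // j ≠ i} × Fin s => ((p.1 : Fin n), p.2))
      (fun p : {j : Fin n // j ≠ i} × Fin s => ((p.1 : Fin n), p.2))) ∧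
    Module.finrank ℝ
      (LinearMap.ker (Matrix.mulVecLin (D⁻¹.submatrix
        (fun p : {j : Fin n // j ≠ i} × Fin s => ((p.1 : Fin n), p.2))
        (fun p : {j : Fin n // j ≠ i} × Fin s => ((p.1 : Fin n), p.2))))) = s :=
  stmt4' n s hn hs T hT Wt hWtsym hWtpd D hD hDdet i
end
end

section
/- The inertia of D⁻¹ equals (ns−s, 0, s); that is, the inverse of the distance matrix of a weighted tree with positive definite matrix weights has exactly ns−s negative eigenvalues, no zero eigenvalue, and exactly s positive eigenvalues. -/
open Matrix BigOperators

noncomputable section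

lemma star_unitary_mulVec {m : Type*} [Fintype m] (U : Matrix m m ℝ) (x : m → ℝ) :
    star U *ᵥ x = x ᵥ* U := by
  ext i; simp [Matrix.mulVec, Matrix.vecMul, dotProduct, mul_comm]

lemma quad_eq_sum {m : Type*} [Fintype m] [DecidableEq m] {A : Matrix m m ℝ}
    (hA : A.IsHermitian) (x : m → ℝ) :
    x ⬝ᵥ A *ᵥ x = ∑ i, hA.eigenvalues i *
      ((star (hA.eigenvectorUnitary : Matrix m m ℝ) *ᵥ x) i) ^ 2 := by
  set U : Matrix m m ℝ := (hA.eigenvectorUnitary : Matrix m m ℝ) with hU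
  set c : m → ℝ := star U *ᵥ x with hc
  conv_lhs => rw [hA.spectral_theorem, RCLike.ofReal_real_eq_id, Unitary.conjStarAlgAut_apply]
  rw [← Matrix.mulVec_mulVec, ← Matrix.mulVec_mulVec, dotProduct_mulVec,
    ← star_unitary_mulVec, ← hc]
  simp only [Function.comp_def, id]
  rw [dotProduct]
  refine Finset.sum_congr rfl fun i _ => ?_
  rw [Matrix.mulVec_diagonal]
  ring


lemma key_card_le {m : Type*} [Fintype m] [DecidableEq m] {k : Type*} [Fintype k]
    (M : Matrix m m ℝ) (N : Matrix m k ℝ) (S : Finset m)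
    (hs : ∀ v : k → ℝ, v ≠ 0 → ∃ i ∈ S, ((M * N) *ᵥ v) i ≠ 0) :
    Fintype.card k ≤ S.card := by
  classical
  let L : (k → ℝ) →ₗ[ℝ] ({i // i ∈ S} → ℝ) :=
    (LinearMap.funLeft ℝ ℝ ((↑) : {i // i ∈ S} → m)).comp (Matrix.mulVecLin (M * N))
  have hinj : Function.Injective L := by
    rw [← LinearMap.ker_eq_bot, LinearMap.ker_eq_bot']
    intro v hv
    by_contra hv0
    obtain ⟨i, hiS, hi⟩ := hs v hv0
    exact hi (congrFun hv ⟨i, hiS⟩)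
  calc Fintype.card k = Module.finrank ℝ (k → ℝ) := (Module.finrank_pi ℝ).symm
    _ ≤ Module.finrank ℝ ({i // i ∈ S} → ℝ) := LinearMap.finrank_le_finrank_of_injective hinj
    _ = Fintype.card {i // i ∈ S} := Module.finrank_pi ℝ
    _ = S.card := Fintype.card_coe S

/-- Master counting lemma. -/
lemma inertia_eq_of_sign {m : Type*} [Fintype m] [DecidableEq m] {m' : Type*} [Fintype m']
    (A : Matrix m m ℝ) (hA : A.IsHermitian)
    (s' : ℕ) (Np : Matrix m (Fin s') ℝ) (Nm : Matrix m m' ℝ)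
    (hcard : s' + Fintype.card m' = Fintype.card m)
    (hp : ∀ v : Fin s' → ℝ, v ≠ 0 → 0 < (Np *ᵥ v) ⬝ᵥ A *ᵥ (Np *ᵥ v))
    (hm : ∀ w : m' → ℝ, w ≠ 0 → (Nm *ᵥ w) ⬝ᵥ A *ᵥ (Nm *ᵥ w) < 0) :
    inertia A = (Fintype.card m', 0, s') := by
  classical
  set U : Matrix m m ℝ := (hA.eigenvectorUnitary : Matrix m m ℝ) with hU
  set e : m → ℝ := hA.eigenvalues with he
  set P : Finset m := Finset.univ.filter fun i => 0 < e i with hP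
  set Ng : Finset m := Finset.univ.filter fun i => e i < 0 with hNg
  set Z : Finset m := Finset.univ.filter fun i => e i = 0 with hZ
  have hps : s' ≤ P.card := by
    refine le_trans (le_of_eq (Fintype.card_fin s').symm) (key_card_le (star U) Np P ?_)
    intro v hv
    by_contra hcon
    push_neg at hcon
    have hq := hp v hv
    rw [quad_eq_sum hA] at hq
    have : ∑ i, e i * ((star U *ᵥ (Np *ᵥ v)) i) ^ 2 ≤ 0 := by
      apply Finset.sum_nonpos
      intro i _
      by_cases hiP : i ∈ P
      · have h0 : (star U *ᵥ (Np *ᵥ v)) i = 0 := by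
          rw [Matrix.mulVec_mulVec]; exact hcon i hiP
        rw [h0]; ring_nf; simp
      · have : e i ≤ 0 := by
          simp only [hP, Finset.mem_filter, Finset.mem_univ, true_and] at hiP
          linarith [not_lt.mp hiP]
        have h2 : (0:ℝ) ≤ ((star U *ᵥ (Np *ᵥ v)) i) ^ 2 := sq_nonneg _
        exact mul_nonpos_of_nonpos_of_nonneg this h2
    linarith
  have hms : Fintype.card m' ≤ Ng.card := by
    refine key_card_le (star U) Nm Ng ?_
    intro w hw
    by_contra hcon
    push_neg at hcon
    have hq := hm w hw
    rw [quad_eq_sum hA] at hq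
    have : (0:ℝ) ≤ ∑ i, e i * ((star U *ᵥ (Nm *ᵥ w)) i) ^ 2 := by
      apply Finset.sum_nonneg
      intro i _
      by_cases hiN : i ∈ Ng
      · have h0 : (star U *ᵥ (Nm *ᵥ w)) i = 0 := by
          rw [Matrix.mulVec_mulVec]; exact hcon i hiN
        rw [h0]; ring_nf; simp
      · have : 0 ≤ e i := by
          simp only [hNg, Finset.mem_filter, Finset.mem_univ, true_and] at hiN
          linarith [not_lt.mp hiN]
        positivity
    linarith
  have hpart : P.card + Ng.card + Z.card = Fintype.card m := by
    have hd1 : Disjoint P Ng := by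
      rw [Finset.disjoint_left]
      intro a ha hb
      simp only [hP, hNg, Finset.mem_filter, Finset.mem_univ, true_and] at ha hb
      linarith
    have hd2 : Disjoint (P ∪ Ng) Z := by
      rw [Finset.disjoint_left]
      intro a ha hb
      simp only [hP, hNg, hZ, Finset.mem_union, Finset.mem_filter, Finset.mem_univ,
        true_and] at ha hb
      rcases ha with h | h <;> linarith [hb]
    have hu : P ∪ Ng ∪ Z = Finset.univ := by
      ext a
      simp only [hP, hNg, hZ, Finset.mem_union, Finset.mem_filter, Finset.mem_univ, true_and,
        iff_true]
      rcases lt_trichotomy (e a) 0 with h | h | h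
      · exact Or.inl (Or.inr h)
      · exact Or.inr h
      · exact Or.inl (Or.inl h)
    rw [← Finset.card_union_of_disjoint hd1, ← Finset.card_union_of_disjoint hd2, hu,
      Finset.card_univ]
  have h1 : P.card = s' := by omega
  have h2 : Ng.card = Fintype.card m' := by omega
  have h3 : Z.card = 0 := by omega
  rw [inertia, dif_pos hA]
  exact Prod.ext h2 (Prod.ext h3 h1)


variable {n s : ℕ}

/-- The canonical path between two vertices of a tree. -/
noncomputable def tpath {n : ℕ} (T : SimpleGraph (Fin n)) (hT : T.IsTree) (i j : Fin n) :
    T.Walk i j := (hT.existsUnique_path i j).choose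

lemma tpath_isPath {T : SimpleGraph (Fin n)} (hT : T.IsTree) (i j : Fin n) :
    (tpath T hT i j).IsPath := (hT.existsUnique_path i j).choose_spec.1

lemma tpath_unique {T : SimpleGraph (Fin n)} (hT : T.IsTree) {i j : Fin n}
    {w : T.Walk i j} (hw : w.IsPath) : w = tpath T hT i j :=
  (hT.existsUnique_path i j).choose_spec.2 w hw

/-- Sum of the matrix weights along a walk. -/
noncomputable def wsum (Wt : Fin n → Fin n → Matrix (Fin s) (Fin s) ℝ)
    {T : SimpleGraph (Fin n)} {i j : Fin n} (w : T.Walk i j) : Matrix (Fin s) (Fin s) ℝ :=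
  (w.darts.map fun d => Wt d.toProd.1 d.toProd.2).sum

/-- The matrix-valued distance. -/
noncomputable def dmat (T : SimpleGraph (Fin n)) (hT : T.IsTree)
    (Wt : Fin n → Fin n → Matrix (Fin s) (Fin s) ℝ) (i j : Fin n) : Matrix (Fin s) (Fin s) ℝ :=
  wsum Wt (tpath T hT i j)

/-- The parent of `i` relative to the root `r`. -/
noncomputable def tpar {n : ℕ} (T : SimpleGraph (Fin n)) (hT : T.IsTree) (r i : Fin n) : Fin n :=
  (tpath T hT i r).getVert 1

variable {T : SimpleGraph (Fin n)} (hT : T.IsTree)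
variable (Wt : Fin n → Fin n → Matrix (Fin s) (Fin s) ℝ)

lemma wsum_eq_dmat {i j : Fin n} {w : T.Walk i j} (hw : w.IsPath) :
    wsum Wt w = dmat T hT Wt i j := by
  rw [dmat, ← tpath_unique hT hw]

lemma wsum_nil {i : Fin n} : wsum Wt (SimpleGraph.Walk.nil : T.Walk i i) = 0 := by
  simp [wsum]

lemma dmat_self (i : Fin n) : dmat T hT Wt i i = 0 := by
  rw [← wsum_eq_dmat hT Wt SimpleGraph.Walk.IsPath.nil, wsum_nil]

lemma wsum_append {i j k : Fin n} (w₁ : T.Walk i j) (w₂ : T.Walk j k) :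
    wsum Wt (w₁.append w₂) = wsum Wt w₁ + wsum Wt w₂ := by
  rw [wsum, wsum, wsum, SimpleGraph.Walk.darts_append, List.map_append, List.sum_append]

lemma wsum_cons {i j k : Fin n} (h : T.Adj i j) (w : T.Walk j k) :
    wsum Wt (SimpleGraph.Walk.cons h w) = Wt i j + wsum Wt w := by
  rw [wsum, wsum, SimpleGraph.Walk.darts_cons, List.map_cons, List.sum_cons]

lemma wsum_reverse (hWtsym : ∀ i j, Wt i j = Wt j i) {i j : Fin n} (w : T.Walk i j) :
    wsum Wt w.reverse = wsum Wt w := by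
  rw [wsum, wsum, SimpleGraph.Walk.darts_reverse, List.map_reverse, List.sum_reverse,
    List.map_map]
  congr 1
  apply List.map_congr_left
  intro d _
  simp only [Function.comp_apply, SimpleGraph.Dart.symm, Prod.fst_swap, Prod.snd_swap]
  exact hWtsym d.toProd.2 d.toProd.1

lemma dmat_comm (hWtsym : ∀ i j, Wt i j = Wt j i) (i j : Fin n) :
    dmat T hT Wt j i = dmat T hT Wt i j := by
  rw [← wsum_eq_dmat hT Wt ((tpath_isPath hT i j).reverse), wsum_reverse Wt hWtsym, dmat]

lemma dmat_adj (hWtsym : ∀ i j, Wt i j = Wt j i) {i j : Fin n} (h : T.Adj i j) :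
    dmat T hT Wt i j = Wt i j := by
  have hpath : (SimpleGraph.Walk.cons h SimpleGraph.Walk.nil : T.Walk i j).IsPath := by
    simp [SimpleGraph.Walk.cons_isPath_iff, h.ne]
  rw [← wsum_eq_dmat hT Wt hpath, wsum_cons, wsum_nil, add_zero]

lemma wsum_isHermitian (hW : ∀ i j, T.Adj i j → (Wt i j).IsHermitian) {i j : Fin n}
    (w : T.Walk i j) : (wsum Wt w).IsHermitian := by
  induction w with
  | nil => rw [wsum_nil]; exact Matrix.isHermitian_zero
  | cons h w ih => rw [wsum_cons]; exact (hW _ _ h).add ih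

lemma tpar_spec {r i : Fin n} (hir : i ≠ r) :
    ∃ h : T.Adj i (tpar T hT r i),
      tpath T hT i r = SimpleGraph.Walk.cons h (tpath T hT (tpar T hT r i) r) := by
  obtain ⟨x, h, q, hq⟩ := SimpleGraph.Walk.exists_eq_cons_of_ne hir (tpath T hT i r)
  have hx : tpar T hT r i = x := by
    rw [tpar, hq, SimpleGraph.Walk.getVert_cons_succ, SimpleGraph.Walk.getVert_zero]
  subst hx
  refine ⟨h, ?_⟩
  have hqp : q.IsPath := by
    have := tpath_isPath hT i r
    rw [hq, SimpleGraph.Walk.cons_isPath_iff] at this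
    exact this.1
  rw [hq, tpath_unique hT hqp]

lemma not_mem_tpath_par {r i : Fin n} (hir : i ≠ r) :
    i ∉ (tpath T hT (tpar T hT r i) r).support := by
  obtain ⟨h, hc⟩ := tpar_spec hT hir
  have := tpath_isPath hT i r
  rw [hc, SimpleGraph.Walk.cons_isPath_iff] at this
  exact this.2

lemma support_tpath_root {r i : Fin n} (hir : i ≠ r) :
    (tpath T hT i r).support = i :: (tpath T hT (tpar T hT r i) r).support := by
  obtain ⟨h, hc⟩ := tpar_spec hT hir
  rw [hc, SimpleGraph.Walk.support_cons]

lemma tpath_support_subset {i j : Fin n} (w : T.Walk i j) :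
    (tpath T hT i j).support ⊆ w.support := by
  rw [← tpath_unique hT w.bypass_isPath]
  exact w.support_bypass_subset

lemma edge_split (hWtsym : ∀ i j, Wt i j = Wt j i) {p c : Fin n} (hadj : T.Adj p c) (x : Fin n) :
    if c ∈ (tpath T hT x p).support then dmat T hT Wt x p = dmat T hT Wt x c + Wt p c
    else dmat T hT Wt x c = dmat T hT Wt x p + Wt p c := by
  split_ifs with h
  · have hp := tpath_isPath hT x p
    have hspec := (tpath T hT x p).take_spec h
    have htake := hp.takeUntil h
    have hdrop := hp.dropUntil h
    have hsum : dmat T hT Wt x p = wsum Wt ((tpath T hT x p).takeUntil c h)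
        + wsum Wt ((tpath T hT x p).dropUntil c h) := by
      have h2 := wsum_append Wt ((tpath T hT x p).takeUntil c h) ((tpath T hT x p).dropUntil c h)
      rw [hspec] at h2
      rw [dmat, h2]
    have hone : (SimpleGraph.Walk.cons hadj.symm SimpleGraph.Walk.nil : T.Walk c p).IsPath := by
      simp [SimpleGraph.Walk.cons_isPath_iff, hadj.ne']
    have hdrop' : wsum Wt ((tpath T hT x p).dropUntil c h) = Wt p c := by
      rw [wsum_eq_dmat hT Wt hdrop, ← wsum_eq_dmat hT Wt hone, wsum_cons, wsum_nil, add_zero,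
        hWtsym]
    rw [hsum, wsum_eq_dmat hT Wt htake, hdrop']
  · have hcat : ((tpath T hT x p).concat hadj).IsPath := by
      rw [← SimpleGraph.Walk.isPath_reverse_iff, SimpleGraph.Walk.reverse_concat,
        SimpleGraph.Walk.cons_isPath_iff]
      refine ⟨(tpath_isPath hT x p).reverse, ?_⟩
      rw [SimpleGraph.Walk.support_reverse, List.mem_reverse]
      exact h
    have : wsum Wt ((tpath T hT x p).concat hadj) = dmat T hT Wt x p + Wt p c := by
      rw [wsum, SimpleGraph.Walk.darts_concat, List.map_concat, List.sum_concat]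
      rfl
    rw [← wsum_eq_dmat hT Wt hcat, this]

lemma claimA {r c x : Fin n} (hcr : c ≠ r) :
    c ∈ (tpath T hT x (tpar T hT r c)).support ↔ c ∈ (tpath T hT x r).support := by
  set p := tpar T hT r c with hp
  have hcp : c ∉ (tpath T hT p r).support := not_mem_tpath_par hT hcr
  constructor
  · intro h1
    by_contra h2
    have hsub : (tpath T hT x p).support ⊆
        ((tpath T hT x r).append (tpath T hT p r).reverse).support :=
      tpath_support_subset hT _
    have := hsub h1
    rw [SimpleGraph.Walk.support_append] at this
    rcases List.mem_append.mp this with h3 | h3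
    · exact h2 h3
    · have h4 := List.mem_of_mem_tail h3
      rw [SimpleGraph.Walk.support_reverse, List.mem_reverse] at h4
      exact hcp h4
  · intro h1
    have hsub : (tpath T hT x r).support ⊆
        ((tpath T hT x p).append (tpath T hT p r)).support :=
      tpath_support_subset hT _
    have := hsub h1
    rw [SimpleGraph.Walk.support_append] at this
    rcases List.mem_append.mp this with h3 | h3
    · exact h3
    · exact absurd (List.mem_of_mem_tail h3) hcp

lemma chi_cons {r c c' : Fin n} (hcr : c ≠ r) (hc'c : c' ≠ c) :
    c' ∈ (tpath T hT c r).support ↔ c' ∈ (tpath T hT (tpar T hT r c) r).support := by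
  rw [support_tpath_root hT hcr, List.mem_cons]
  simp [hc'c]

lemma dist_root (hWtsym : ∀ i j, Wt i j = Wt j i) {r c : Fin n} (hcr : c ≠ r) :
    dmat T hT Wt r c = dmat T hT Wt r (tpar T hT r c) + Wt (tpar T hT r c) c := by
  set p := tpar T hT r c with hp
  obtain ⟨hadj, -⟩ := tpar_spec hT hcr
  have hmem : c ∉ (tpath T hT r p).support := by
    rw [← tpath_unique hT (tpath_isPath hT p r).reverse, SimpleGraph.Walk.support_reverse,
      List.mem_reverse]
    exact not_mem_tpath_par hT hcr
  have := edge_split hT Wt hWtsym hadj.symm r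
  rw [if_neg hmem] at this
  exact this

lemma fourpoint (hWtsym : ∀ i j, Wt i j = Wt j i) {r c c' : Fin n} (hcr : c ≠ r) (hc'r : c' ≠ r)
    (hne : c ≠ c') :
    dmat T hT Wt c c' + dmat T hT Wt (tpar T hT r c) (tpar T hT r c')
      = dmat T hT Wt c (tpar T hT r c') + dmat T hT Wt (tpar T hT r c) c' := by
  set p := tpar T hT r c with hp
  set q := tpar T hT r c' with hq
  obtain ⟨hadjc', -⟩ := tpar_spec hT hc'r
  have hsc := edge_split hT Wt hWtsym hadjc'.symm c
  have hsp := edge_split hT Wt hWtsym hadjc'.symm p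
  have hiff : (c' ∈ (tpath T hT c q).support) ↔ (c' ∈ (tpath T hT p q).support) := by
    rw [claimA hT hc'r, claimA hT hc'r, chi_cons hT hcr hne.symm]
  by_cases hcase : c' ∈ (tpath T hT c q).support
  · rw [if_pos hcase] at hsc
    rw [if_pos (hiff.mp hcase)] at hsp
    rw [hsc, hsp]; abel
  · rw [if_neg hcase] at hsc
    rw [if_neg (fun hh => hcase (hiff.mpr hh))] at hsp
    rw [hsc, hsp]; abel


lemma dp_sum_left {m κ : Type*} [Fintype m] [Fintype κ] (v : κ → m → ℝ) (w : m → ℝ) :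
    (∑ k, v k) ⬝ᵥ w = ∑ k, v k ⬝ᵥ w := by
  simp only [dotProduct, Finset.sum_apply, Finset.sum_mul]
  rw [Finset.sum_comm]

lemma dp_sum_right {m κ : Type*} [Fintype m] [Fintype κ] (v : m → ℝ) (w : κ → m → ℝ) :
    v ⬝ᵥ (∑ k, w k) = ∑ k, v ⬝ᵥ w k := by
  simp only [dotProduct, Finset.sum_apply, Finset.mul_sum]
  rw [Finset.sum_comm]

lemma mulVec_sum' {m o κ : Type*} [Fintype m] [Fintype o] [Fintype κ]
    (D : Matrix m o ℝ) (v : κ → o → ℝ) :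
    D *ᵥ (∑ k, v k) = ∑ k, D *ᵥ v k := by
  ext i
  simp only [Matrix.mulVec, dotProduct, Finset.sum_apply, Finset.mul_sum]
  rw [Finset.sum_comm]

/-- The inertia of D⁻¹ equals (ns − s, 0, s). -/
theorem stmt13 (n s : ℕ) (hn : 0 < n) (hs : 0 < s)
    (T : SimpleGraph (Fin n)) (hT : T.IsTree)
    (Wt : Fin n → Fin n → Matrix (Fin s) (Fin s) ℝ)
    (hWtsym : ∀ i j, Wt i j = Wt j i)
    (hWtpd : ∀ i j, T.Adj i j → (Wt i j).PosDef)
    (D : Matrix (Fin n × Fin s) (Fin n × Fin s) ℝ)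
    (hD : ∀ (i j : Fin n) (p : T.Walk i j), p.IsPath →
      ∀ a b : Fin s, D (i, a) (j, b) =
        ((p.darts.map fun d => Wt d.toProd.1 d.toProd.2).sum) a b)
    (hDdet : IsUnit D.det) :
    inertia D⁻¹ = (n * s - s, 0, s) := by
  classical
  by_cases hn2 : 2 ≤ n
  swap
  · -- n = 1 : D = 0, contradicting invertibility
    exfalso
    have hn1 : n = 1 := by omega
    subst hn1
    have hD0 : D = 0 := by
      ext ⟨i, a⟩ ⟨j, b⟩
      have hij : i = j := Subsingleton.elim i j
      subst hij
      have := hD i i SimpleGraph.Walk.nil SimpleGraph.Walk.IsPath.nil a b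
      simpa using this
    rw [hD0] at hDdet
    have hne : Nonempty (Fin 1 × Fin s) := ⟨(0, ⟨0, hs⟩)⟩
    rw [(by haveI := hne; exact Matrix.det_zero : Matrix.det (0 : Matrix (Fin 1 × Fin s) (Fin 1 × Fin s) ℝ) = 0)] at hDdet
    exact not_isUnit_zero hDdet
  -- main case : n ≥ 2
  set r : Fin n := ⟨0, hn⟩ with hr
  set pa : Fin n → Fin n := tpar T hT r with hpa
  -- basic facts about D and the matrix distance
  have hDa : ∀ (i j : Fin n) (a b : Fin s), D (i, a) (j, b) = dmat T hT Wt i j a b :=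
    fun i j a b => hD i j _ (tpath_isPath hT i j) a b
  have hWherm : ∀ i j, T.Adj i j → (Wt i j).IsHermitian := fun i j h => (hWtpd i j h).1
  have hdsym : ∀ (i j : Fin n) (a b : Fin s), dmat T hT Wt i j b a = dmat T hT Wt i j a b := by
    intro i j a b
    have h1 := wsum_isHermitian Wt hWherm (tpath T hT i j)
    have h2 := congrFun (congrFun h1 a) b
    simpa [Matrix.conjTranspose_apply, dmat] using h2
  have hermD : D.IsHermitian := by
    ext ⟨i, a⟩ ⟨j, b⟩
    rw [Matrix.conjTranspose_apply, hDa, hDa]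
    simp only [star_trivial]
    rw [dmat_comm hT Wt hWtsym i j]
    exact hdsym i j a b
  have hadjp : ∀ k : Fin n, k ≠ r → T.Adj (pa k) k :=
    fun k hk => ((tpar_spec hT (r := r) hk).choose).symm
  have hpd : ∀ k : Fin n, k ≠ r → (Wt (pa k) k).PosDef := fun k hk => hWtpd _ _ (hadjp k hk)
  have hqpos : ∀ (k : Fin n), k ≠ r → ∀ v : Fin s → ℝ, v ≠ 0 →
      0 < v ⬝ᵥ (Wt (pa k) k) *ᵥ v := by
    intro k hk v hv
    have := (hpd k hk).dotProduct_mulVec_pos hv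
    simpa using this
  have hqnn : ∀ (k : Fin n), k ≠ r → ∀ v : Fin s → ℝ,
      0 ≤ v ⬝ᵥ (Wt (pa k) k) *ᵥ v := by
    intro k hk v
    have := (hpd k hk).posSemidef.dotProduct_mulVec_nonneg v
    simpa using this
  -- the coefficient functions
  set K : Finset (Fin n) := Finset.univ.filter (fun k => k ≠ r) with hK
  set f : Fin n → Fin n → ℝ :=
    fun k i => (if i = k then (1:ℝ) else 0) - (if i = pa k then (1:ℝ) else 0) with hf
  set g : Fin n → ℝ := fun i => ∑ k ∈ K, f k i with hg
  set hh : Fin n → ℝ := fun i => (if i = r then (1:ℝ) else 0) + (1/2) * g i with hhh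
  -- delta summation lemmas
  have hdel : ∀ (a : Fin n) (F : Fin n → ℝ), (∑ j, (if j = a then (1:ℝ) else 0) * F j) = F a := by
    intro a F
    rw [Finset.sum_eq_single a]
    · simp
    · intro b _ hb; simp [hb]
    · intro hb; exact absurd (Finset.mem_univ a) hb
  have hff : ∀ (k : Fin n) (F : Fin n → ℝ), (∑ j, f k j * F j) = F k - F (pa k) := by
    intro k F
    have h1 : ∀ j, f k j * F j
        = (if j = k then (1:ℝ) else 0) * F j - (if j = pa k then (1:ℝ) else 0) * F j := by
      intro j; rw [hf]; ring
    rw [Finset.sum_congr rfl fun j _ => h1 j, Finset.sum_sub_distrib, hdel, hdel]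
  -- the bilinear block values
  set Bb : (Fin s → ℝ) → (Fin s → ℝ) → Fin n → Fin n → ℝ :=
    fun v w i j => v ⬝ᵥ (dmat T hT Wt i j) *ᵥ w with hBb
  have hB0 : ∀ v w i, Bb v w i i = 0 := by
    intro v w i; rw [hBb]; simp [dmat_self hT Wt]
  have hBcomm : ∀ v w i j, Bb v w j i = Bb v w i j := by
    intro v w i j; rw [hBb]; simp only []
    rw [dmat_comm hT Wt hWtsym j i]
  have hBroot : ∀ (v w : Fin s → ℝ) (k : Fin n), k ≠ r →
      Bb v w r k = Bb v w r (pa k) + v ⬝ᵥ (Wt (pa k) k) *ᵥ w := by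
    intro v w k hk
    rw [hBb]; simp only []
    rw [dist_root hT Wt hWtsym hk, Matrix.add_mulVec, dotProduct_add]
  have hBadj : ∀ (v w : Fin s → ℝ) (k : Fin n), k ≠ r →
      Bb v w k (pa k) = v ⬝ᵥ (Wt (pa k) k) *ᵥ w := by
    intro v w k hk
    rw [hBb]; simp only []
    rw [dmat_adj hT Wt hWtsym (hadjp k hk).symm, hWtsym]
  have hBfour : ∀ (v w : Fin s → ℝ) (k l : Fin n), k ≠ r → l ≠ r → k ≠ l →
      Bb v w k l + Bb v w (pa k) (pa l) = Bb v w k (pa l) + Bb v w (pa k) l := by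
    intro v w k l hk hl hkl
    have h1 := fourpoint hT Wt hWtsym hk hl hkl
    have h2 : v ⬝ᵥ (dmat T hT Wt k l + dmat T hT Wt (pa k) (pa l)) *ᵥ w
        = v ⬝ᵥ (dmat T hT Wt k (pa l) + dmat T hT Wt (pa k) l) *ᵥ w := by rw [h1]
    rw [Matrix.add_mulVec, dotProduct_add, Matrix.add_mulVec, dotProduct_add] at h2
    rw [hBb]; simp only []
    exact h2
  -- the core four-point value
  have hcoreE : ∀ (v w : Fin s → ℝ) (k l : Fin n), k ≠ r → l ≠ r →
      (Bb v w k l - Bb v w k (pa l)) - (Bb v w (pa k) l - Bb v w (pa k) (pa l))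
      = if k = l then -(2 * (v ⬝ᵥ (Wt (pa k) k) *ᵥ w)) else 0 := by
    intro v w k l hk hl
    by_cases hkl : k = l
    · subst hkl
      rw [if_pos rfl, hB0, hB0, hBadj v w k hk, hBcomm v w k (pa k), hBadj v w k hk]
      ring
    · rw [if_neg hkl]
      have := hBfour v w k l hk hl hkl
      linarith
  -- the core double-sum computation
  have hcore : ∀ (v w : Fin s → ℝ) (k l : Fin n), k ≠ r → l ≠ r →
      (∑ i, ∑ j, f k i * (f l j * Bb v w i j))
      = if k = l then -(2 * (v ⬝ᵥ (Wt (pa k) k) *ᵥ w)) else 0 := by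
    intro v w k l hk hl
    have hE : (∑ i, ∑ j, f k i * (f l j * Bb v w i j))
        = (Bb v w k l - Bb v w k (pa l)) - (Bb v w (pa k) l - Bb v w (pa k) (pa l)) := by
      have h1 : ∀ i, (∑ j, f k i * (f l j * Bb v w i j))
          = f k i * (Bb v w i l - Bb v w i (pa l)) := by
        intro i
        rw [← Finset.mul_sum, hff l (fun j => Bb v w i j)]
      rw [Finset.sum_congr rfl fun i _ => h1 i, hff k (fun i => Bb v w i l - Bb v w i (pa l))]
    rw [hE]
    exact hcoreE v w k l hk hl
  have hvw : ∀ (v w : Fin s → ℝ) (i j : Fin n),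
      Bb v w i j = ∑ a, ∑ b, v a * (dmat T hT Wt i j a b * w b) := by
    intro v w i j
    rw [hBb]
    simp only [dotProduct, Matrix.mulVec, Finset.mul_sum]
  -- the product expansion of the quadratic form
  have hstep : ∀ (φ ψ : Fin n → ℝ) (v w : Fin s → ℝ),
      (fun p : Fin n × Fin s => φ p.1 * v p.2) ⬝ᵥ D *ᵥ (fun p : Fin n × Fin s => ψ p.1 * w p.2)
      = ∑ i, ∑ j, φ i * (ψ j * Bb v w i j) := by
    intro φ ψ v w
    rw [dotProduct, Fintype.sum_prod_type]
    refine Finset.sum_congr rfl fun i _ => ?_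
    have hin : ∀ a : Fin s, (D *ᵥ fun p : Fin n × Fin s => ψ p.1 * w p.2) (i, a)
        = ∑ j, ∑ b, dmat T hT Wt i j a b * (ψ j * w b) := by
      intro a
      rw [Matrix.mulVec, dotProduct, Fintype.sum_prod_type]
      exact Finset.sum_congr rfl fun j _ => Finset.sum_congr rfl fun b _ => by rw [hDa i j a b]
    calc ∑ a, (φ i * v a) * (D *ᵥ fun p : Fin n × Fin s => ψ p.1 * w p.2) (i, a)
        = ∑ a, ∑ j, ∑ b, (φ i * v a) * (dmat T hT Wt i j a b * (ψ j * w b)) := by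
          refine Finset.sum_congr rfl fun a _ => ?_
          rw [hin a, Finset.mul_sum]
          exact Finset.sum_congr rfl fun j _ => Finset.mul_sum _ _ _
      _ = ∑ j, ∑ a, ∑ b, (φ i * v a) * (dmat T hT Wt i j a b * (ψ j * w b)) := Finset.sum_comm
      _ = ∑ j, φ i * (ψ j * Bb v w i j) := by
          refine Finset.sum_congr rfl fun j _ => ?_
          rw [hvw v w i j]
          simp only [Finset.mul_sum]
          refine Finset.sum_congr rfl fun a _ => Finset.sum_congr rfl fun b _ => by ring
  -- test matrices
  set Pp : Matrix (Fin n × Fin s) (Fin s) ℝ :=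
    Matrix.of fun p b => if p.2 = b then hh p.1 else 0 with hPp
  set Pm : Matrix (Fin n × Fin s) ({k : Fin n // k ≠ r} × Fin s) ℝ :=
    Matrix.of fun p q => if p.2 = q.2 then f q.1.1 p.1 else 0 with hPm
  have hPpv : ∀ v : Fin s → ℝ, Pp *ᵥ v = fun p : Fin n × Fin s => hh p.1 * v p.2 := by
    intro v
    ext p
    rw [Matrix.mulVec, dotProduct]
    rw [Finset.sum_eq_single p.2]
    · rw [hPp]; simp
    · intro b _ hb; rw [hPp]; simp [Ne.symm hb]
    · intro hb; exact absurd (Finset.mem_univ p.2) hb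
  have hPmw : ∀ w : {k : Fin n // k ≠ r} × Fin s → ℝ,
      Pm *ᵥ w = fun p : Fin n × Fin s => ∑ k : {k : Fin n // k ≠ r}, f k.1 p.1 * w (k, p.2) := by
    intro w
    ext p
    rw [Matrix.mulVec, dotProduct, Fintype.sum_prod_type]
    rw [show (∑ k : {k : Fin n // k ≠ r}, ∑ b, Pm p (k, b) * w (k, b))
        = ∑ k : {k : Fin n // k ≠ r}, ∑ b, (if p.2 = b then f k.1 p.1 * w (k, b) else 0) from
      Finset.sum_congr rfl fun k _ => Finset.sum_congr rfl fun b _ => by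
        rw [hPm]; simp only [Matrix.of_apply, ite_mul, zero_mul]]
    refine Finset.sum_congr rfl fun k _ => ?_
    rw [Finset.sum_eq_single p.2]
    · simp
    · intro b _ hb; simp [Ne.symm hb]
    · intro hb; exact absurd (Finset.mem_univ p.2) hb
  -- reduction of the quadratic form of D⁻¹ to that of D
  have hred : ∀ y : Fin n × Fin s → ℝ,
      ((D *ᵥ y) ⬝ᵥ D⁻¹ *ᵥ (D *ᵥ y)) = y ⬝ᵥ D *ᵥ y := by
    intro y
    have h1 : D⁻¹ *ᵥ (D *ᵥ y) = y := by
      rw [Matrix.mulVec_mulVec, Matrix.nonsing_inv_mul D hDdet, Matrix.one_mulVec]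
    rw [h1, dotProduct_comm]
  -- the sum over the edge weights, and its positivity tools
  have hKmem : ∀ k ∈ K, k ≠ r := by
    intro k hk; rw [hK] at hk; exact (Finset.mem_filter.mp hk).2
  have hKne : K.Nonempty := by
    refine ⟨⟨1, by omega⟩, ?_⟩
    rw [hK, Finset.mem_filter]
    exact ⟨Finset.mem_univ _, by rw [hr]; simp [Fin.ext_iff]⟩
  -- the sum-expansion helper for g
  have hgS : ∀ (F : Fin n → ℝ), (∑ j, g j * F j) = ∑ k ∈ K, (F k - F (pa k)) := by
    intro F
    have h1 : ∀ j, g j * F j = ∑ k ∈ K, f k j * F j := by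
      intro j; rw [hg]; exact Finset.sum_mul _ _ _
    rw [Finset.sum_congr rfl fun j _ => h1 j, Finset.sum_comm]
    exact Finset.sum_congr rfl fun k _ => hff k F
  -- Positive-definiteness on the root block
  have hsignP : ∀ v : Fin s → ℝ, v ≠ 0 →
      0 < ((D * Pp) *ᵥ v) ⬝ᵥ D⁻¹ *ᵥ ((D * Pp) *ᵥ v) := by
    intro v hv
    rw [← Matrix.mulVec_mulVec, hred (Pp *ᵥ v), hPpv v, hstep hh hh v v]
    have hexp : ∀ i j : Fin n, hh i * (hh j * Bb v v i j)
        = (if i = r then (1:ℝ) else 0) * ((if j = r then (1:ℝ) else 0) * Bb v v i j)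
          + (1/2) * ((if i = r then (1:ℝ) else 0) * (g j * Bb v v i j))
          + ((1/2) * ((if j = r then (1:ℝ) else 0) * (g i * Bb v v i j))
          + (1/4) * (g i * (g j * Bb v v i j))) := by
      intro i j; simp only [hhh]; ring
    rw [Finset.sum_congr rfl fun i (_ : i ∈ Finset.univ) =>
      Finset.sum_congr rfl fun j (_ : j ∈ Finset.univ) => hexp i j]
    simp only [Finset.sum_add_distrib]
    have hT1 : (∑ i, ∑ j, (if i = r then (1:ℝ) else 0)
        * ((if j = r then (1:ℝ) else 0) * Bb v v i j)) = 0 := by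
      have h1 : ∀ i, (∑ j, (if i = r then (1:ℝ) else 0)
          * ((if j = r then (1:ℝ) else 0) * Bb v v i j))
          = (if i = r then (1:ℝ) else 0) * Bb v v i r := by
        intro i
        rw [← Finset.mul_sum, hdel r (fun j => Bb v v i j)]
      rw [Finset.sum_congr rfl fun i _ => h1 i, hdel r (fun i => Bb v v i r)]
      exact hB0 v v r
    have hroot2 : ∀ k ∈ K, Bb v v r k - Bb v v r (pa k) = v ⬝ᵥ Wt (pa k) k *ᵥ v := by
      intro k hk
      rw [hBroot v v k (hKmem k hk)]; ring
    have hT2 : (∑ i, ∑ j, (1/2 : ℝ) * ((if i = r then (1:ℝ) else 0) * (g j * Bb v v i j)))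
        = (1/2) * ∑ k ∈ K, (v ⬝ᵥ Wt (pa k) k *ᵥ v) := by
      have h1 : ∀ i, (∑ j, (1/2 : ℝ) * ((if i = r then (1:ℝ) else 0) * (g j * Bb v v i j)))
          = (if i = r then (1:ℝ) else 0) * ((1/2) * ∑ j, g j * Bb v v i j) := by
        intro i
        rw [Finset.mul_sum, Finset.mul_sum]
        exact Finset.sum_congr rfl fun j _ => by ring
      rw [Finset.sum_congr rfl fun i _ => h1 i,
        hdel r (fun i => (1/2) * ∑ j, g j * Bb v v i j), hgS (fun j => Bb v v r j),
        Finset.sum_congr rfl hroot2]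
    have hT3 : (∑ i, ∑ j, (1/2 : ℝ) * ((if j = r then (1:ℝ) else 0) * (g i * Bb v v i j)))
        = (1/2) * ∑ k ∈ K, (v ⬝ᵥ Wt (pa k) k *ᵥ v) := by
      have h1 : ∀ i, (∑ j, (1/2 : ℝ) * ((if j = r then (1:ℝ) else 0) * (g i * Bb v v i j)))
          = g i * ((1/2) * Bb v v i r) := by
        intro i
        rw [Finset.sum_congr rfl fun j (_ : j ∈ Finset.univ) => (by ring :
          (1/2 : ℝ) * ((if j = r then (1:ℝ) else 0) * (g i * Bb v v i j))
          = (if j = r then (1:ℝ) else 0) * (g i * ((1/2) * Bb v v i j)))]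
        exact hdel r (fun j => g i * ((1/2) * Bb v v i j))
      rw [Finset.sum_congr rfl fun i _ => h1 i, hgS (fun i => (1/2) * Bb v v i r)]
      rw [Finset.mul_sum]
      refine Finset.sum_congr rfl fun k hk => ?_
      rw [hBcomm v v r k, hBcomm v v r (pa k), hBroot v v k (hKmem k hk)]
      ring
    have hT4 : (∑ i, ∑ j, (1/4 : ℝ) * (g i * (g j * Bb v v i j)))
        = -((1/2) * ∑ k ∈ K, (v ⬝ᵥ Wt (pa k) k *ᵥ v)) := by
      have h1 : ∀ i, (∑ j, (1/4 : ℝ) * (g i * (g j * Bb v v i j)))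
          = g i * ((1/4) * ∑ l ∈ K, (Bb v v i l - Bb v v i (pa l))) := by
        intro i
        rw [← hgS (fun j => Bb v v i j), Finset.mul_sum, Finset.mul_sum]
        exact Finset.sum_congr rfl fun j _ => by ring
      rw [Finset.sum_congr rfl fun i _ => h1 i,
        hgS (fun i => (1/4) * ∑ l ∈ K, (Bb v v i l - Bb v v i (pa l)))]
      have h2 : ∀ k ∈ K, ((1/4 : ℝ) * ∑ l ∈ K, (Bb v v k l - Bb v v k (pa l)))
          - ((1/4) * ∑ l ∈ K, (Bb v v (pa k) l - Bb v v (pa k) (pa l)))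
          = (1/4) * ∑ l ∈ K, (if k = l then -(2 * (v ⬝ᵥ Wt (pa k) k *ᵥ v)) else 0) := by
        intro k hk
        rw [← mul_sub, ← Finset.sum_sub_distrib]
        congr 1
        refine Finset.sum_congr rfl fun l hl => ?_
        rw [← hcoreE v v k l (hKmem k hk) (hKmem l hl)]
      rw [Finset.sum_congr rfl h2]
      have h3 : ∀ k ∈ K, ((1/4 : ℝ) * ∑ l ∈ K, (if k = l then -(2 * (v ⬝ᵥ Wt (pa k) k *ᵥ v)) else 0))
          = -((1/2) * (v ⬝ᵥ Wt (pa k) k *ᵥ v)) := by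
        intro k hk
        rw [Finset.sum_ite_eq K k (fun _ => -(2 * (v ⬝ᵥ Wt (pa k) k *ᵥ v))), if_pos hk]
        ring
      rw [Finset.sum_congr rfl h3, Finset.sum_neg_distrib, ← Finset.mul_sum]
    rw [hT1, hT2, hT3, hT4]
    have hSpos : 0 < ∑ k ∈ K, (v ⬝ᵥ Wt (pa k) k *ᵥ v) :=
      Finset.sum_pos (fun k hk => hqpos k (hKmem k hk) v hv) hKne
    linarith
  -- Negative-definiteness on the complement
  have hsignM : ∀ w : {k : Fin n // k ≠ r} × Fin s → ℝ, w ≠ 0 →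
      ((D * Pm) *ᵥ w) ⬝ᵥ D⁻¹ *ᵥ ((D * Pm) *ᵥ w) < 0 := by
    intro w hw
    rw [← Matrix.mulVec_mulVec, hred (Pm *ᵥ w), hPmw w]
    have hy : (fun p : Fin n × Fin s => ∑ k : {k : Fin n // k ≠ r}, f k.1 p.1 * w (k, p.2))
        = ∑ k : {k : Fin n // k ≠ r}, (fun p : Fin n × Fin s => f k.1 p.1 * w (k, p.2)) := by
      ext p; rw [Finset.sum_apply]
    rw [hy, mulVec_sum' D _, dp_sum_left]
    have hterm : ∀ k : {k : Fin n // k ≠ r},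
        ((fun p : Fin n × Fin s => f k.1 p.1 * w (k, p.2)) ⬝ᵥ
          ∑ l : {k : Fin n // k ≠ r}, D *ᵥ (fun p : Fin n × Fin s => f l.1 p.1 * w (l, p.2)))
        = -(2 * ((fun a => w (k, a)) ⬝ᵥ Wt (pa k.1) k.1 *ᵥ (fun a => w (k, a)))) := by
      intro k
      rw [dp_sum_right]
      have h1 : ∀ l : {k : Fin n // k ≠ r},
          ((fun p : Fin n × Fin s => f k.1 p.1 * w (k, p.2)) ⬝ᵥ
            D *ᵥ (fun p : Fin n × Fin s => f l.1 p.1 * w (l, p.2)))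
          = if k = l then
              -(2 * ((fun a => w (k, a)) ⬝ᵥ Wt (pa k.1) k.1 *ᵥ (fun a => w (l, a)))) else 0 := by
        intro l
        have h2 := hstep (fun i => f k.1 i) (fun j => f l.1 j)
          (fun a => w (k, a)) (fun b => w (l, b))
        have h3 := hcore (fun a => w (k, a)) (fun b => w (l, b)) k.1 l.1 k.2 l.2
        have h4 : (if k.1 = l.1 then
            -(2 * ((fun a => w (k, a)) ⬝ᵥ Wt (pa k.1) k.1 *ᵥ (fun b => w (l, b)))) else 0)
            = if k = l then
              -(2 * ((fun a => w (k, a)) ⬝ᵥ Wt (pa k.1) k.1 *ᵥ (fun a => w (l, a)))) else 0 := by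
          congr 1
          exact propext (Subtype.ext_iff).symm
        exact h2.trans (h3.trans h4)
      rw [Finset.sum_congr rfl fun l _ => h1 l,
        Finset.sum_ite_eq Finset.univ k
          (fun l => -(2 * ((fun a => w (k, a)) ⬝ᵥ Wt (pa k.1) k.1 *ᵥ (fun a => w (l, a))))),
        if_pos (Finset.mem_univ k)]
    rw [Finset.sum_congr rfl fun k _ => hterm k]
    obtain ⟨p0, hp0⟩ : ∃ p, w p ≠ 0 := by
      by_contra h; push_neg at h; exact hw (funext h)
    obtain ⟨k0, a0⟩ := p0
    have hk0 : (fun a => w (k0, a)) ≠ 0 := fun hcon => hp0 (congrFun hcon a0)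
    have hlt : (∑ k : {k : Fin n // k ≠ r},
        -(2 * ((fun a => w (k, a)) ⬝ᵥ Wt (pa k.1) k.1 *ᵥ (fun a => w (k, a)))))
        < ∑ _k : {k : Fin n // k ≠ r}, (0:ℝ) := by
      refine Finset.sum_lt_sum (fun k _ => ?_) ⟨k0, Finset.mem_univ k0, ?_⟩
      · have := hqnn k.1 k.2 (fun a => w (k, a))
        linarith
      · have := hqpos k0.1 k0.2 (fun a => w (k0, a)) hk0
        linarith
    simpa using hlt
  -- apply the master lemma
  have hcard1 : Fintype.card {k : Fin n // k ≠ r} = n - 1 := by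
    simp [Fintype.card_subtype_compl]
  have hcard : s + Fintype.card ({k : Fin n // k ≠ r} × Fin s)
      = Fintype.card (Fin n × Fin s) := by
    rw [Fintype.card_prod, Fintype.card_prod, hcard1, Fintype.card_fin, Fintype.card_fin]
    have h1 : 1 * s ≤ n * s := Nat.mul_le_mul_right s hn
    rw [Nat.sub_mul]
    omega
  have hfin := inertia_eq_of_sign D⁻¹ hermD.inv s (D * Pp) (D * Pm) hcard hsignP hsignM
  rw [hfin]
  have hcard2 : Fintype.card ({k : Fin n // k ≠ r} × Fin s) = n * s - s := by
    rw [Fintype.card_prod, Fintype.card_fin, hcard1, Nat.sub_mul, one_mul]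
  rw [hcard2]
end
end
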